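/- arXiv:2102.11306 — 5 statements merged into one kernel-verified Lean document; each statement's English description precedes it below -/
import Mathlib

section
/- Let w = w_0w_1⋯w_n be a generalized snake word of length n, and for 1 ≤ i ≤ n let f_i(w) be the generalized snake word of length n obtained from w by replacing w_j with the opposite letter (L ↔ R) for every j ≥ i. If i = 1, or if 2 ≤ i ≤ n and w_{i−1} = w_i, then e(P(f_i(w))) ≤ e(P(w)); moreover, under this hypothesis equality holds if and only if i = 1. In particular e(P(f_1(w))) = e(P(w)), and e(P(f_i(w))) < e(P(w)) whenever 2 ≤ i ≤ n and w_{i−1} = w_i. -/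
/-- The two-letter alphabet `{L, R}` for generalized snake words. -/
inductive Letter : Type
  | L
  | R
  deriving DecidableEq

/-- The element of the generalized snake poset covered by `2m+2` (besides the relations
coming from `2m+3`): it is `2m-1` when the word turns at the `m`-th letter
(i.e. `m = 1` and `w 1 = L`, or `m ≥ 2` and `w (m-1) ≠ w m`), and `2m` otherwise. -/
def snakeSide (w : ℕ → Letter) (m : ℕ) : ℕ :=
  if (m = 1 ∧ w 1 = Letter.L) ∨ (2 ≤ m ∧ w (m - 1) ≠ w m) then 2 * m - 1 else 2 * m

/-- The covering relation of the generalized snake poset `P(w)` for the word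
`ε w₁ ⋯ w_n` (the letter `w i` for `1 ≤ i ≤ n` is the `i`-th letter).
`SnakeCov n w a b` means `a ≺ b`, i.e. `a` is covered by `b`. -/
inductive SnakeCov (n : ℕ) (w : ℕ → Letter) : ℕ → ℕ → Prop
  | cov10 : SnakeCov n w 1 0
  | cov20 : SnakeCov n w 2 0
  | cov31 : SnakeCov n w 3 1
  | cov32 : SnakeCov n w 3 2
  | covOdd (m : ℕ) (h1 : 1 ≤ m) (h2 : m ≤ n) : SnakeCov n w (2 * m + 3) (2 * m + 1)
  | covBot (m : ℕ) (h1 : 1 ≤ m) (h2 : m ≤ n) : SnakeCov n w (2 * m + 3) (2 * m + 2)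
  | covSide (m : ℕ) (h1 : 1 ≤ m) (h2 : m ≤ n) : SnakeCov n w (2 * m + 2) (snakeSide w m)

/-- The order relation of the generalized snake poset `P(w)` on `{0, …, 2n+3}`:
the reflexive-transitive closure of the covering relation. -/
def SnakeLE (n : ℕ) (w : ℕ → Letter) : ℕ → ℕ → Prop :=
  Relation.ReflTransGen (SnakeCov n w)

theorem snakeCov_lt {n : ℕ} {w : ℕ → Letter} {a b : ℕ} (h : SnakeCov n w a b) : b < a := by
  cases h
  case covSide m h1 h2 => unfold snakeSide; split <;> omega
  all_goals omega

theorem snakeLE_le {n : ℕ} {w : ℕ → Letter} {a b : ℕ} (h : SnakeLE n w a b) : b ≤ a := by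
  induction h with
  | refl => exact le_refl a
  | tail _ hc ih => exact le_trans (le_of_lt (snakeCov_lt hc)) ih

/-- The generalized snake poset `P(ε w₁ ⋯ w_n)` as a type: its elements are `0, 1, …, 2n+3`. -/
def SnakePoset (n : ℕ) (w : ℕ → Letter) : Type := Fin (2 * n + 4)

instance (n : ℕ) (w : ℕ → Letter) : PartialOrder (SnakePoset n w) where
  le a b := SnakeLE n w a.1 b.1
  le_refl _ := Relation.ReflTransGen.refl
  le_trans _ _ _ h1 h2 := Relation.ReflTransGen.trans h1 h2
  le_antisymm a b h1 h2 := Fin.ext (Nat.le_antisymm (snakeLE_le h2) (snakeLE_le h1))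

/-- The number of linear extensions of `P(ε w₁ ⋯ w_n)`: order-preserving bijections
onto the chain `Fin (2n+4)`.  By Stanley's theorem this is the normalized volume of
the order polytope `O(P(w))`. -/
noncomputable def linExtCount (n : ℕ) (w : ℕ → Letter) : ℕ :=
  Nat.card {f : SnakePoset n w ≃ Fin (2 * n + 4) //
    ∀ a b : SnakePoset n w, a ≤ b → f a ≤ f b}

/-- The collection of filters (upper order ideals) of `P(ε w₁ ⋯ w_n)`,
as subsets of `{0, …, 2n+3} ⊆ ℕ`. -/
def SnakeFilters (n : ℕ) (w : ℕ → Letter) : Set (Set ℕ) :=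
  {A | (∀ a ∈ A, a < 2 * n + 4) ∧ ∀ a ∈ A, ∀ b, SnakeLE n w a b → b ∈ A}

/-- The filter of `P(ε w₁ ⋯ w_n)` generated by a set `S`: its upward closure. -/
def snakeUp (n : ℕ) (w : ℕ → Letter) (S : Set ℕ) : Set ℕ :=
  {b | ∃ a ∈ S, SnakeLE n w a b}

/-- The alternating word `L R L R ⋯` (letter `i` is `L` for odd `i`),
defining the snake poset `S_n = P(ε L R L R ⋯)`. -/
def altWord : ℕ → Letter := fun i => if i % 2 = 1 then Letter.L else Letter.R

/-- Flipping a letter `L ↔ R`. -/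
def Letter.flip : Letter → Letter
  | Letter.L => Letter.R
  | Letter.R => Letter.L

/-- The swap operation `f_i`: flip all letters with index `≥ i`. -/
def swapFrom (w : ℕ → Letter) (i : ℕ) : ℕ → Letter :=
  fun j => if i ≤ j then (w j).flip else w j

/-- Membership in `𝒱`: the letter sequence `w₁ ⋯ w_n` contains neither `LRL` nor
`RLR` as a consecutive substring. -/
def InV (n : ℕ) (w : ℕ → Letter) : Prop :=
  ∀ i, 1 ≤ i → i + 2 ≤ n → w i = w (i + 1) ∨ w (i + 1) = w (i + 2)

/-- The order on `{0, …, 2n+5}` making `P̂(w)`: the poset `P(w)` (elements `0, …, 2n+3`)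
with a new maximum `2n+4` and a new minimum `2n+5` adjoined. -/
def SnakeHatLE (n : ℕ) (w : ℕ → Letter) (a b : ℕ) : Prop :=
  a = 2 * n + 5 ∨ b = 2 * n + 4 ∨ (a < 2 * n + 4 ∧ b < 2 * n + 4 ∧ SnakeLE n w a b)

/-- The lattice `P̂(w)`: `P(w)` with a new minimum `0̂ = 2n+5` and maximum `1̂ = 2n+4`. -/
def SnakeHat (n : ℕ) (w : ℕ → Letter) : Type := Fin (2 * n + 6)

instance (n : ℕ) (w : ℕ → Letter) : PartialOrder (SnakeHat n w) where
  le a b := SnakeHatLE n w a.1 b.1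
  le_refl a := by
    by_cases h5 : a.1 = 2 * n + 5
    · exact Or.inl h5
    · by_cases h4 : a.1 = 2 * n + 4
      · exact Or.inr (Or.inl h4)
      · have := a.2
        exact Or.inr (Or.inr ⟨by omega, by omega, Relation.ReflTransGen.refl⟩)
  le_trans a b c hab hbc := by
    rcases hab with h | h | ⟨ha, hb, hab⟩
    · exact Or.inl h
    · rcases hbc with h' | h' | ⟨hb', hc, hbc⟩
      · exact absurd h' (by omega)
      · exact Or.inr (Or.inl h')
      · exact absurd h (by omega)
    · rcases hbc with h' | h' | ⟨hb', hc, hbc⟩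
      · exact absurd h' (by omega)
      · exact Or.inr (Or.inl h')
      · exact Or.inr (Or.inr ⟨ha, hc, Relation.ReflTransGen.trans hab hbc⟩)
  le_antisymm a b h1 h2 := by
    apply Fin.ext
    rcases h1 with h | h | ⟨ha, hb, hab⟩ <;>
      rcases h2 with h' | h' | ⟨ha', hb', hba⟩ <;>
        first
          | omega
          | exact Nat.le_antisymm (snakeLE_le hba) (snakeLE_le hab)

/-- An element `x` of a (finite) lattice is meet-irreducible if it is not the maximum
element and whenever `x` is the meet (greatest lower bound) of `y` and `z`,
one has `x = y` or `x = z`. -/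
def MeetIrred {α : Type*} [PartialOrder α] (x : α) : Prop :=
  ¬IsTop x ∧ ∀ y z : α, IsGLB {y, z} x → x = y ∨ x = z

/-- The poset `Q_w` of meet-irreducible elements of `P̂(w)`, as an induced subposet. -/
abbrev SnakeQ (n : ℕ) (w : ℕ → Letter) : Type :=
  {x : SnakeHat n w // MeetIrred x}

/-- The vertex set of the order polytope `O(α)` of a finite poset `α`: the 0/1 indicator
vectors of the filters of `α`. -/
def OPVertexSet (α : Type*) [PartialOrder α] : Set (α → ℝ) :=
  {v | ∃ A : Set α, (∀ a ∈ A, ∀ b, a ≤ b → b ∈ A) ∧ v = A.indicator fun _ => (1 : ℝ)}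

/-- A circuit of a point configuration: an affinely dependent set all of whose proper
subsets are affinely independent. -/
def IsAffCircuit {α : Type*} (Z : Set (α → ℝ)) : Prop :=
  ¬AffineIndependent ℝ (Subtype.val : Z → (α → ℝ)) ∧
    ∀ Y : Set (α → ℝ), Y ⊂ Z → AffineIndependent ℝ (Subtype.val : Y → (α → ℝ))

/-- The adjacency relation of the graph `G(w)` on vertices `{0, 1, …, n}`:
consecutive indices are adjacent, and `i` and `i+2` are adjacent when
`w (i+1) ≠ w (i+2)` (a turn of the word). -/
def snakeAdj (n : ℕ) (w : ℕ → Letter) (i j : ℕ) : Prop :=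
  (j = i + 1 ∧ j ≤ n) ∨ (i = j + 1 ∧ i ≤ n) ∨
    (j = i + 2 ∧ j ≤ n ∧ w (i + 1) ≠ w (i + 2)) ∨
    (i = j + 2 ∧ i ≤ n ∧ w (j + 1) ≠ w (j + 2))

/-- `𝒢(w)`: the collection of nonempty subsets of `{0, …, n}` inducing connected
subgraphs of `G(w)`. -/
def GSets (n : ℕ) (w : ℕ → Letter) : Set (Set ℕ) :=
  {S | S.Nonempty ∧ (∀ i ∈ S, i ≤ n) ∧
    ∀ a ∈ S, ∀ b ∈ S,
      Relation.ReflTransGen (fun x y => x ∈ S ∧ y ∈ S ∧ snakeAdj n w x y) a b}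

/-! ### Auxiliary machinery for `stmt6` -/

section Aux

/-- Flipping twice is the identity. -/
theorem Letter.flip_flip (x : Letter) : x.flip.flip = x := by cases x <;> rfl

theorem Letter.flip_inj {x y : Letter} (h : x.flip = y.flip) : x = y := by
  cases x <;> cases y <;> first | rfl | exact absurd h (by decide)

theorem Letter.ne_flip_self (x : Letter) : x ≠ x.flip := by cases x <;> decide

/-- Both endpoints of a cover relation are bounded. -/
theorem snakeCov_bound {n : ℕ} {w : ℕ → Letter} {u v : ℕ} (h : SnakeCov n w u v) :
    u < 2 * n + 4 ∧ v < 2 * n + 4 := by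
  cases h with
  | covSide m h1 h2 =>
      have hs : snakeSide w m = 2 * m - 1 ∨ snakeSide w m = 2 * m := by
        unfold snakeSide; split
        · exact Or.inl rfl
        · exact Or.inr rfl
      omega
  | cov10 => omega
  | cov20 => omega
  | cov31 => omega
  | cov32 => omega
  | covOdd m h1 h2 => omega
  | covBot m h1 h2 => omega

theorem side_mem' (w : ℕ → Letter) (m : ℕ) :
    snakeSide w m = 2 * m - 1 ∨ snakeSide w m = 2 * m := by
  unfold snakeSide; split
  · exact Or.inl rfl
  · exact Or.inr rfl

/-- Linear extension property. -/
def IsExt (n : ℕ) (w : ℕ → Letter) (f : SnakePoset n w ≃ Fin (2 * n + 4)) : Prop :=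
  ∀ a b : SnakePoset n w, a ≤ b → f a ≤ f b

theorem isExt_of_cov {n : ℕ} {w : ℕ → Letter} {f : SnakePoset n w ≃ Fin (2 * n + 4)}
    (hf : ∀ (u v : ℕ) (hu : u < 2 * n + 4) (hv : v < 2 * n + 4),
      SnakeCov n w u v → f ⟨u, hu⟩ ≤ f ⟨v, hv⟩) :
    IsExt n w f := by
  have key : ∀ p q : ℕ, SnakeLE n w p q →
      ∀ (hp : p < 2 * n + 4) (hq : q < 2 * n + 4), f ⟨p, hp⟩ ≤ f ⟨q, hq⟩ := by
    intro p q h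
    have h' : Relation.ReflTransGen (SnakeCov n w) p q := h
    clear h
    induction h' with
    | refl => intro hp hq; exact le_refl _
    | tail h1 h2 ih =>
        intro hp hq
        have hc := (snakeCov_bound h2).1
        exact le_trans (ih hp hc) (hf _ _ hc hq h2)
  intro a b hab
  exact key a.1 b.1 hab a.2 b.2

theorem cov_of_isExt {n : ℕ} {w : ℕ → Letter} {f : SnakePoset n w ≃ Fin (2 * n + 4)}
    (hf : IsExt n w f) :
    ∀ (u v : ℕ) (hu : u < 2 * n + 4) (hv : v < 2 * n + 4),
      SnakeCov n w u v → f ⟨u, hu⟩ ≤ f ⟨v, hv⟩ :=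
  fun u v hu hv h => hf ⟨u, hu⟩ ⟨v, hv⟩ (Relation.ReflTransGen.single h)

theorem finmk_eq {N a b : ℕ} (ha : a < N) (hb : b < N) (h : a = b) :
    (⟨a, ha⟩ : Fin N) = ⟨b, hb⟩ := by subst h; rfl

/-- Swapping from position `i` does not change the side at positions `m ≠ i`. -/
theorem side_swap_ne (w : ℕ → Letter) (i m : ℕ) (hi : 1 ≤ i) (hm : m ≠ i) :
    snakeSide (swapFrom w i) m = snakeSide w m := by
  have e : ∀ j, ¬ i ≤ j → swapFrom w i j = w j := fun j hj => if_neg hj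
  have e' : ∀ j, i ≤ j → swapFrom w i j = (w j).flip := fun j hj => if_pos hj
  unfold snakeSide
  rcases lt_or_gt_of_ne hm with hlt | hgt
  · apply if_congr _ rfl rfl
    constructor
    · rintro (⟨rfl, hL⟩ | ⟨hm2, hne⟩)
      · exact Or.inl ⟨rfl, by rwa [e 1 (by omega)] at hL⟩
      · exact Or.inr ⟨hm2, by rwa [e (m-1) (by omega), e m (by omega)] at hne⟩
    · rintro (⟨rfl, hL⟩ | ⟨hm2, hne⟩)
      · exact Or.inl ⟨rfl, by rwa [e 1 (by omega)]⟩
      · exact Or.inr ⟨hm2, by rwa [e (m-1) (by omega), e m (by omega)]⟩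
  · apply if_congr _ rfl rfl
    constructor
    · rintro (⟨h1, _⟩ | ⟨hm2, hne⟩)
      · omega
      · refine Or.inr ⟨hm2, fun hEq => hne ?_⟩
        rw [e' (m-1) (by omega), e' m (by omega), hEq]
    · rintro (⟨h1, _⟩ | ⟨hm2, hne⟩)
      · omega
      · refine Or.inr ⟨hm2, fun hEq => hne ?_⟩
        rw [e' (m-1) (by omega), e' m (by omega)] at hEq
        exact Letter.flip_inj hEq

theorem side_w_at_i (w : ℕ → Letter) (i : ℕ) (h2 : 2 ≤ i) (hww : w (i-1) = w i) :
    snakeSide w i = 2 * i := by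
  unfold snakeSide
  rw [if_neg]
  rintro (⟨h, _⟩ | ⟨_, h⟩)
  · omega
  · exact h hww

theorem side_w'_at_i (w : ℕ → Letter) (i : ℕ) (h2 : 2 ≤ i) (hww : w (i-1) = w i) :
    snakeSide (swapFrom w i) i = 2 * i - 1 := by
  have hne : swapFrom w i (i-1) ≠ swapFrom w i i := by
    rw [show swapFrom w i (i-1) = w (i-1) from if_neg (by omega),
        show swapFrom w i i = (w i).flip from if_pos (le_refl i), hww]
    exact Letter.ne_flip_self (w i)
  unfold snakeSide
  rw [if_pos (Or.inr ⟨h2, hne⟩)]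

theorem bcov1 (n i : ℕ) (W : ℕ → Letter) (h2 : 2 ≤ i) (hn : i ≤ n) :
    SnakeCov n W (2*i-1) (2*i-3) := by
  rcases Nat.lt_or_ge i 3 with h3 | h3
  · have hi2 : i = 2 := by omega
    subst hi2
    exact SnakeCov.cov31
  · have h := SnakeCov.covOdd (n := n) (w := W) (i-2) (by omega) (by omega)
    have e1 : 2*(i-2)+3 = 2*i-1 := by omega
    have e2 : 2*(i-2)+1 = 2*i-3 := by omega
    rwa [e1, e2] at h

theorem bcov2 (n i : ℕ) (W : ℕ → Letter) (h2 : 2 ≤ i) (hn : i ≤ n) :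
    SnakeCov n W (2*i-1) (2*i-2) := by
  rcases Nat.lt_or_ge i 3 with h3 | h3
  · have hi2 : i = 2 := by omega
    subst hi2
    exact SnakeCov.cov32
  · have h := SnakeCov.covBot (n := n) (w := W) (i-2) (by omega) (by omega)
    have e1 : 2*(i-2)+3 = 2*i-1 := by omega
    have e2 : 2*(i-2)+2 = 2*i-2 := by omega
    rwa [e1, e2] at h

theorem acov (n i : ℕ) (W : ℕ → Letter) (h2 : 2 ≤ i) (hn : i ≤ n) :
    SnakeCov n W (2*i) (snakeSide W (i-1)) := by
  have h := SnakeCov.covSide (n := n) (w := W) (i-1) (by omega) (by omega)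
  rwa [show 2*(i-1)+2 = 2*i from by omega] at h

theorem ocov_a (n i : ℕ) (W : ℕ → Letter) (h2 : 2 ≤ i) (hn : i ≤ n) :
    SnakeCov n W (2*i+1) (2*i) := by
  have h := SnakeCov.covBot (n := n) (w := W) (i-1) (by omega) (by omega)
  rwa [show 2*(i-1)+3 = 2*i+1 from by omega, show 2*(i-1)+2 = 2*i from by omega] at h

theorem ocov_b (n i : ℕ) (W : ℕ → Letter) (h2 : 2 ≤ i) (hn : i ≤ n) :
    SnakeCov n W (2*i+1) (2*i-1) := by
  have h := SnakeCov.covOdd (n := n) (w := W) (i-1) (by omega) (by omega)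
  rwa [show 2*(i-1)+3 = 2*i+1 from by omega, show 2*(i-1)+1 = 2*i-1 from by omega] at h

theorem xcov_w (n i : ℕ) (w : ℕ → Letter) (h2 : 2 ≤ i) (hn : i ≤ n)
    (hww : w (i-1) = w i) : SnakeCov n w (2*i+2) (2*i) := by
  have h := SnakeCov.covSide (n := n) (w := w) i (by omega) hn
  rwa [side_w_at_i w i h2 hww] at h

theorem xcov_w' (n i : ℕ) (w : ℕ → Letter) (h2 : 2 ≤ i) (hn : i ≤ n)
    (hww : w (i-1) = w i) : SnakeCov n (swapFrom w i) (2*i+2) (2*i-1) := by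
  have h := SnakeCov.covSide (n := n) (w := swapFrom w i) i (by omega) hn
  rwa [side_w'_at_i w i h2 hww] at h

theorem cov_w_elim {n i : ℕ} {w : ℕ → Letter} (h2 : 2 ≤ i) (hn : i ≤ n)
    (hww : w (i-1) = w i) {u v : ℕ} (h : SnakeCov n w u v) :
    (u = 2*i+2 ∧ v = 2*i) ∨ SnakeCov n (swapFrom w i) u v := by
  cases h with
  | cov10 => exact Or.inr SnakeCov.cov10
  | cov20 => exact Or.inr SnakeCov.cov20
  | cov31 => exact Or.inr SnakeCov.cov31
  | cov32 => exact Or.inr SnakeCov.cov32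
  | covOdd m hm1 hm2 => exact Or.inr (SnakeCov.covOdd m hm1 hm2)
  | covBot m hm1 hm2 => exact Or.inr (SnakeCov.covBot m hm1 hm2)
  | covSide m hm1 hm2 =>
      by_cases hmi : m = i
      · subst hmi
        exact Or.inl ⟨rfl, side_w_at_i w m h2 hww⟩
      · right
        have h := SnakeCov.covSide (n := n) (w := swapFrom w i) m hm1 hm2
        rwa [side_swap_ne w i m (by omega) hmi] at h

theorem T1' (n i : ℕ) (w : ℕ → Letter) (h2 : 2 ≤ i) (hn : i ≤ n) (hww : w (i-1) = w i)
    (f : SnakePoset n (swapFrom w i) ≃ Fin (2*n+4)) (hf : IsExt n (swapFrom w i) f)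
    (hx : 2*i+2 < 2*n+4) (ha : 2*i < 2*n+4)
    (hxa : f ⟨2*i+2, hx⟩ ≤ f ⟨2*i, ha⟩) : IsExt n w f := by
  apply isExt_of_cov
  intro u v hu hv hcov
  rcases cov_w_elim h2 hn hww hcov with ⟨rfl, rfl⟩ | hcov'
  · exact hxa
  · exact cov_of_isExt hf u v hu hv hcov'

theorem T2' (n i : ℕ) (w : ℕ → Letter) (h2 : 2 ≤ i) (hn : i ≤ n) (hww : w (i-1) = w i)
    (f : SnakePoset n (swapFrom w i) ≃ Fin (2*n+4)) (hf : IsExt n (swapFrom w i) f)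
    (hx : 2*i+2 < 2*n+4) (ha : 2*i < 2*n+4) (hb : 2*i-1 < 2*n+4)
    (hxa : ¬ f ⟨2*i+2, hx⟩ ≤ f ⟨2*i, ha⟩) :
    IsExt n w ((Equiv.swap (⟨2*i, ha⟩ : Fin (2*n+4)) ⟨2*i-1, hb⟩).trans f) := by
  have hf' := cov_of_isExt hf
  set σ := Equiv.swap (⟨2*i, ha⟩ : Fin (2*n+4)) ⟨2*i-1, hb⟩ with hσ
  have hfix : ∀ (z : ℕ) (hz : z < 2*n+4), z ≠ 2*i → z ≠ 2*i-1 →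
      σ ⟨z, hz⟩ = ⟨z, hz⟩ := by
    intro z hz hz1 hz2
    rw [hσ]
    exact Equiv.swap_apply_of_ne_of_ne
      (fun h => hz1 (congrArg Fin.val h)) (fun h => hz2 (congrArg Fin.val h))
  have hswapA : σ ⟨2*i, ha⟩ = ⟨2*i-1, hb⟩ := by rw [hσ]; exact Equiv.swap_apply_left _ _
  have hswapB : σ (⟨2*i-1, hb⟩ : Fin (2*n+4)) = ⟨2*i, ha⟩ := by
    rw [hσ]; exact Equiv.swap_apply_right _ _
  have hb3b : 2*i-3 < 2*n+4 := by omega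
  have hb2b : 2*i-2 < 2*n+4 := by omega
  have hob : 2*i+1 < 2*n+4 := by omega
  have hxb : f ⟨2*i+2, hx⟩ ≤ f ⟨2*i-1, hb⟩ :=
    hf' _ _ hx hb (xcov_w' n i w h2 hn hww)
  have hb3 : f ⟨2*i-1, hb⟩ ≤ f ⟨2*i-3, hb3b⟩ :=
    hf' _ _ hb hb3b (bcov1 n i (swapFrom w i) h2 hn)
  have hb2 : f ⟨2*i-1, hb⟩ ≤ f ⟨2*i-2, hb2b⟩ :=
    hf' _ _ hb hb2b (bcov2 n i (swapFrom w i) h2 hn)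
  have hax : f ⟨2*i, ha⟩ ≤ f ⟨2*i+2, hx⟩ := le_of_not_ge hxa
  have hoA : f ⟨2*i+1, hob⟩ ≤ f ⟨2*i, ha⟩ :=
    hf' _ _ hob ha (ocov_a n i (swapFrom w i) h2 hn)
  have hoB : f ⟨2*i+1, hob⟩ ≤ f ⟨2*i-1, hb⟩ :=
    hf' _ _ hob hb (ocov_b n i (swapFrom w i) h2 hn)
  have hA3 : f ⟨2*i, ha⟩ ≤ f ⟨2*i-3, hb3b⟩ := le_trans hax (le_trans hxb hb3)
  have hA2 : f ⟨2*i, ha⟩ ≤ f ⟨2*i-2, hb2b⟩ := le_trans hax (le_trans hxb hb2)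
  have hsw : snakeSide (swapFrom w i) (i-1) = snakeSide w (i-1) :=
    side_swap_ne w i (i-1) (by omega) (by omega)
  have hsmem := side_mem' w (i-1)
  have hsb : snakeSide w (i-1) < 2*n+4 := by omega
  have hAs : f ⟨2*i, ha⟩ ≤ f ⟨snakeSide w (i-1), hsb⟩ := by
    have h := acov n i (swapFrom w i) h2 hn
    rw [hsw] at h
    exact hf' _ _ ha hsb h
  apply isExt_of_cov
  intro u v hu hv hcov
  show f (σ ⟨u, hu⟩) ≤ f (σ ⟨v, hv⟩)
  cases hcov with
  | cov10 =>
      have e1 := hfix (1) hu (by omega) (by omega)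
      have e2 := hfix (0) hv (by omega) (by omega)
      rw [e1, e2]
      exact hf' _ _ hu hv SnakeCov.cov10
  | cov20 =>
      have e1 := hfix (2) hu (by omega) (by omega)
      have e2 := hfix (0) hv (by omega) (by omega)
      rw [e1, e2]
      exact hf' _ _ hu hv SnakeCov.cov20
  | cov31 =>
      by_cases hi2 : i = 2
      · have e1 : (⟨3, hu⟩ : Fin (2*n+4)) = ⟨2*i-1, hb⟩ := finmk_eq _ _ (by omega)
        have e2 := hfix (1) hv (by omega) (by omega)
        rw [e1, hswapB, e2]
        have e3 : (⟨1, hv⟩ : Fin (2*n+4)) = ⟨2*i-3, hb3b⟩ := finmk_eq _ _ (by omega)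
        rw [e3]
        exact hA3
      · have e1 := hfix (3) hu (by omega) (by omega)
        have e2 := hfix (1) hv (by omega) (by omega)
        rw [e1, e2]
        exact hf' _ _ hu hv SnakeCov.cov31
  | cov32 =>
      by_cases hi2 : i = 2
      · have e1 : (⟨3, hu⟩ : Fin (2*n+4)) = ⟨2*i-1, hb⟩ := finmk_eq _ _ (by omega)
        have e2 := hfix (2) hv (by omega) (by omega)
        rw [e1, hswapB, e2]
        have e3 : (⟨2, hv⟩ : Fin (2*n+4)) = ⟨2*i-2, hb2b⟩ := finmk_eq _ _ (by omega)
        rw [e3]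
        exact hA2
      · have e1 := hfix (3) hu (by omega) (by omega)
        have e2 := hfix (2) hv (by omega) (by omega)
        rw [e1, e2]
        exact hf' _ _ hu hv SnakeCov.cov32
  | covOdd m hm1 hm2 =>
      by_cases hmA : m = i-2
      · have e1 : (⟨2*m+3, hu⟩ : Fin (2*n+4)) = ⟨2*i-1, hb⟩ := finmk_eq _ _ (by omega)
        have e2 := hfix (2*m+1) hv (by omega) (by omega)
        rw [e1, hswapB, e2]
        have e3 : (⟨2*m+1, hv⟩ : Fin (2*n+4)) = ⟨2*i-3, hb3b⟩ := finmk_eq _ _ (by omega)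
        rw [e3]
        exact hA3
      · by_cases hmB : m = i-1
        · have e1 := hfix (2*m+3) hu (by omega) (by omega)
          have e2 : (⟨2*m+1, hv⟩ : Fin (2*n+4)) = ⟨2*i-1, hb⟩ := finmk_eq _ _ (by omega)
          rw [e1, e2, hswapB]
          have e3 : (⟨2*m+3, hu⟩ : Fin (2*n+4)) = ⟨2*i+1, hob⟩ := finmk_eq _ _ (by omega)
          rw [e3]
          exact hoA
        · have e1 := hfix (2*m+3) hu (by omega) (by omega)
          have e2 := hfix (2*m+1) hv (by omega) (by omega)
          rw [e1, e2]
          exact hf' _ _ hu hv (SnakeCov.covOdd m hm1 hm2)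
  | covBot m hm1 hm2 =>
      by_cases hmA : m = i-2
      · have e1 : (⟨2*m+3, hu⟩ : Fin (2*n+4)) = ⟨2*i-1, hb⟩ := finmk_eq _ _ (by omega)
        have e2 := hfix (2*m+2) hv (by omega) (by omega)
        rw [e1, hswapB, e2]
        have e3 : (⟨2*m+2, hv⟩ : Fin (2*n+4)) = ⟨2*i-2, hb2b⟩ := finmk_eq _ _ (by omega)
        rw [e3]
        exact hA2
      · by_cases hmB : m = i-1
        · have e1 := hfix (2*m+3) hu (by omega) (by omega)
          have e2 : (⟨2*m+2, hv⟩ : Fin (2*n+4)) = ⟨2*i, ha⟩ := finmk_eq _ _ (by omega)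
          rw [e1, e2, hswapA]
          have e3 : (⟨2*m+3, hu⟩ : Fin (2*n+4)) = ⟨2*i+1, hob⟩ := finmk_eq _ _ (by omega)
          rw [e3]
          exact hoB
        · have e1 := hfix (2*m+3) hu (by omega) (by omega)
          have e2 := hfix (2*m+2) hv (by omega) (by omega)
          rw [e1, e2]
          exact hf' _ _ hu hv (SnakeCov.covBot m hm1 hm2)
  | covSide m hm1 hm2 =>
      by_cases hmi : m = i
      · have e1 := hfix (2*m+2) hu (by omega) (by omega)
        have e2 : (⟨snakeSide w m, hv⟩ : Fin (2*n+4)) = ⟨2*i, ha⟩ :=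
          finmk_eq _ _ (by rw [hmi]; exact side_w_at_i w i h2 hww)
        rw [e1, e2, hswapA]
        have e3 : (⟨2*m+2, hu⟩ : Fin (2*n+4)) = ⟨2*i+2, hx⟩ := finmk_eq _ _ (by omega)
        rw [e3]
        exact hxb
      · by_cases hmi1 : m = i-1
        · have e1 : (⟨2*m+2, hu⟩ : Fin (2*n+4)) = ⟨2*i, ha⟩ := finmk_eq _ _ (by omega)
          have hveq : snakeSide w m = snakeSide w (i-1) := by rw [hmi1]
          have e2 := hfix (snakeSide w m) hv (by omega) (by omega)
          rw [e1, hswapA, e2]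
          rcases hsmem with hss | hss
          · have e3 : (⟨snakeSide w m, hv⟩ : Fin (2*n+4)) = ⟨2*i-3, hb3b⟩ := finmk_eq _ _ (by omega)
            rw [e3]
            exact hb3
          · have e3 : (⟨snakeSide w m, hv⟩ : Fin (2*n+4)) = ⟨2*i-2, hb2b⟩ := finmk_eq _ _ (by omega)
            rw [e3]
            exact hb2
        · have hvm := side_mem' w m
          have e1 := hfix (2*m+2) hu (by omega) (by omega)
          have e2 := hfix (snakeSide w m) hv (by omega) (by omega)
          rw [e1, e2]
          have hcv : SnakeCov n (swapFrom w i) (2*m+2) (snakeSide w m) := by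
            have h := SnakeCov.covSide (n := n) (w := swapFrom w i) m hm1 hm2
            rwa [side_swap_ne w i m (by omega) hmi] at h
          exact hf' _ _ hu hv hcv

/-- Ranking function used to build a special linear extension witnessing strictness. -/
def rho (i s c z : ℕ) : ℕ :=
  if z = s then 2*i-3 else if z = 2*i then 2*i-2 else if z = c then 2*i-1
  else if z = 2*i+2 then 2*i else if z = 2*i-1 then 2*i+1 else if z = 2*i+1 then 2*i+2
  else z

theorem rho_lt {n i s c : ℕ} (h2 : 2 ≤ i) (hn : i ≤ n)
    (hsc : (s = 2*i-3 ∧ c = 2*i-2) ∨ (s = 2*i-2 ∧ c = 2*i-3))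
    {z : ℕ} (hz : z < 2*n+4) : rho i s c z < 2*n+4 := by
  unfold rho; split_ifs <;> first | omega | exact False.elim (by assumption)

theorem rho_inj {i s c : ℕ} (h2 : 2 ≤ i)
    (hsc : (s = 2*i-3 ∧ c = 2*i-2) ∨ (s = 2*i-2 ∧ c = 2*i-3))
    {z1 z2 : ℕ} (h : rho i s c z1 = rho i s c z2) : z1 = z2 := by
  unfold rho at h; split_ifs at h <;> first | omega | exact False.elim (by assumption)

set_option maxHeartbeats 1000000 in
theorem rho_c10 {i s c : ℕ} (h2 : 2 ≤ i)
    (hsc : (s = 2*i-3 ∧ c = 2*i-2) ∨ (s = 2*i-2 ∧ c = 2*i-3)) :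
    rho i s c 0 < rho i s c 1 ∧ rho i s c 0 < rho i s c 2 := by
  constructor <;> (unfold rho; split_ifs <;> first | omega | exact False.elim (by assumption))

set_option maxHeartbeats 1000000 in
theorem rho_c31 {i s c : ℕ} (h2 : 2 ≤ i)
    (hsc : (s = 2*i-3 ∧ c = 2*i-2) ∨ (s = 2*i-2 ∧ c = 2*i-3)) :
    rho i s c 1 < rho i s c 3 ∧ rho i s c 2 < rho i s c 3 := by
  constructor <;> (unfold rho; split_ifs <;> first | omega | exact False.elim (by assumption))

set_option maxHeartbeats 1600000 in
theorem rho_codd {i s c m : ℕ} (h2 : 2 ≤ i)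
    (hsc : (s = 2*i-3 ∧ c = 2*i-2) ∨ (s = 2*i-2 ∧ c = 2*i-3)) :
    rho i s c (2*m+1) < rho i s c (2*m+3) := by
  unfold rho; split_ifs <;> omega

set_option maxHeartbeats 1600000 in
theorem rho_cbot {i s c m : ℕ} (h2 : 2 ≤ i)
    (hsc : (s = 2*i-3 ∧ c = 2*i-2) ∨ (s = 2*i-2 ∧ c = 2*i-3)) :
    rho i s c (2*m+2) < rho i s c (2*m+3) := by
  unfold rho; split_ifs <;> omega

set_option maxHeartbeats 1000000 in
theorem rho_side_i {i s c : ℕ} (h2 : 2 ≤ i)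
    (hsc : (s = 2*i-3 ∧ c = 2*i-2) ∨ (s = 2*i-2 ∧ c = 2*i-3)) :
    rho i s c (2*i) < rho i s c (2*i+2) := by
  unfold rho; split_ifs <;> omega

set_option maxHeartbeats 1000000 in
theorem rho_side_i1 {i s c : ℕ} (h2 : 2 ≤ i)
    (hsc : (s = 2*i-3 ∧ c = 2*i-2) ∨ (s = 2*i-2 ∧ c = 2*i-3)) :
    rho i s c s < rho i s c (2*i) := by
  unfold rho; split_ifs <;> omega

set_option maxHeartbeats 2000000 in
theorem rho_side_other {i s c m : ℕ} (h2 : 2 ≤ i) (hm : 1 ≤ m) (hmi : m ≠ i)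
    (hmi1 : m ≠ i-1)
    (hsc : (s = 2*i-3 ∧ c = 2*i-2) ∨ (s = 2*i-2 ∧ c = 2*i-3)) :
    rho i s c (2*m-1) < rho i s c (2*m+2) ∧ rho i s c (2*m) < rho i s c (2*m+2) := by
  constructor <;> (unfold rho; split_ifs <;> omega)

theorem rho_cov {n i : ℕ} {w : ℕ → Letter} (h2 : 2 ≤ i) (hn : i ≤ n)
    (hww : w (i-1) = w i) {s c : ℕ} (hs_def : s = snakeSide w (i-1))
    (hsc : (s = 2*i-3 ∧ c = 2*i-2) ∨ (s = 2*i-2 ∧ c = 2*i-3)) :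
    ∀ u v, SnakeCov n w u v → rho i s c v < rho i s c u := by
  intro u v h
  cases h with
  | cov10 => exact (rho_c10 h2 hsc).1
  | cov20 => exact (rho_c10 h2 hsc).2
  | cov31 => exact (rho_c31 h2 hsc).1
  | cov32 => exact (rho_c31 h2 hsc).2
  | covOdd m hm1 hm2 => exact rho_codd h2 hsc
  | covBot m hm1 hm2 => exact rho_cbot h2 hsc
  | covSide m hm1 hm2 =>
      by_cases hmi : m = i
      · have hv : snakeSide w m = 2*i := by rw [hmi]; exact side_w_at_i w i h2 hww
        rw [hv, show 2*m+2 = 2*i+2 from by omega]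
        exact rho_side_i h2 hsc
      · by_cases hmi1 : m = i-1
        · have hv : snakeSide w m = s := by rw [hmi1, ← hs_def]
          rw [hv, show 2*m+2 = 2*i from by omega]
          exact rho_side_i1 h2 hsc
        · rcases side_mem' w m with hv | hv <;> rw [hv]
          · exact (rho_side_other h2 hm1 hmi hmi1 hsc).1
          · exact (rho_side_other h2 hm1 hmi hmi1 hsc).2

/-- The comparison map between sets of linear extensions. -/
noncomputable def Gmap (n i : ℕ) (w : ℕ → Letter) (h2 : 2 ≤ i) (hn : i ≤ n)
    (hww : w (i-1) = w i)
    (hx : 2*i+2 < 2*n+4) (ha : 2*i < 2*n+4) (hb : 2*i-1 < 2*n+4)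
    (F : {f : SnakePoset n (swapFrom w i) ≃ Fin (2*n+4) // ∀ a b, a ≤ b → f a ≤ f b}) :
    {f : SnakePoset n w ≃ Fin (2*n+4) // ∀ a b, a ≤ b → f a ≤ f b} :=
  if hxa : F.1 ⟨2*i+2, hx⟩ ≤ F.1 ⟨2*i, ha⟩
  then ⟨F.1, T1' n i w h2 hn hww F.1 F.2 hx ha hxa⟩
  else ⟨(Equiv.swap (⟨2*i, ha⟩ : Fin (2*n+4)) ⟨2*i-1, hb⟩).trans F.1,
        T2' n i w h2 hn hww F.1 F.2 hx ha hb hxa⟩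

theorem strictLt (n i : ℕ) (w : ℕ → Letter) (h2 : 2 ≤ i) (hn : i ≤ n)
    (hww : w (i-1) = w i) :
    linExtCount n (swapFrom w i) < linExtCount n w := by
  classical
  have hx : 2*i+2 < 2*n+4 := by omega
  have ha : 2*i < 2*n+4 := by omega
  have hb : 2*i-1 < 2*n+4 := by omega
  set s := snakeSide w (i-1) with hs_def
  set c := 4*i-5-s with hc_def
  have hsmem : s = 2*(i-1)-1 ∨ s = 2*(i-1) := side_mem' w (i-1)
  have hsc : (s = 2*i-3 ∧ c = 2*i-2) ∨ (s = 2*i-2 ∧ c = 2*i-3) := by omega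
  have hcb : c < 2*n+4 := by omega
  -- construct the special extension hstar
  have hrb : ∀ z : Fin (2*n+4), 2*n+3 - rho i s c z.1 < 2*n+4 := fun z => by omega
  have hrlt : ∀ z : ℕ, z < 2*n+4 → rho i s c z < 2*n+4 :=
    fun z hz => rho_lt h2 hn hsc hz
  let Ff : Fin (2*n+4) → Fin (2*n+4) := fun z => ⟨2*n+3 - rho i s c z.1, hrb z⟩
  have hFinj : Function.Injective Ff := by
    intro z1 z2 hEq
    have hv : 2*n+3 - rho i s c z1.1 = 2*n+3 - rho i s c z2.1 := congrArg Fin.val hEq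
    have h1 := hrlt z1.1 z1.2
    have h2' := hrlt z2.1 z2.2
    have : rho i s c z1.1 = rho i s c z2.1 := by omega
    exact Fin.ext (rho_inj h2 hsc this)
  have hFbij : Function.Bijective Ff := (Finite.injective_iff_bijective).mp hFinj
  let hstar : SnakePoset n w ≃ Fin (2*n+4) := Equiv.ofBijective Ff hFbij
  have hstar_val : ∀ (z : ℕ) (hz : z < 2*n+4),
      (hstar ⟨z, hz⟩ : Fin (2*n+4)).1 = 2*n+3 - rho i s c z := fun z hz => rfl
  have hstarExt : IsExt n w hstar := by
    apply isExt_of_cov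
    intro u v hu hv hcov
    have hlt := rho_cov h2 hn hww hs_def hsc u v hcov
    show (hstar ⟨u, hu⟩ : Fin (2*n+4)).1 ≤ (hstar ⟨v, hv⟩ : Fin (2*n+4)).1
    rw [hstar_val u hu, hstar_val v hv]
    omega
  have hρx : rho i s c (2*i+2) = 2*i := by unfold rho; split_ifs <;> first | omega | exact False.elim (by assumption)
  have hρb : rho i s c (2*i-1) = 2*i+1 := by unfold rho; split_ifs <;> first | omega | exact False.elim (by assumption)
  have hρa : rho i s c (2*i) = 2*i-2 := by unfold rho; split_ifs <;> first | omega | exact False.elim (by assumption)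
  have hρc : rho i s c c = 2*i-1 := by unfold rho; split_ifs <;> first | omega | exact False.elim (by assumption)
  have hBX : ¬ (hstar ⟨2*i+2, hx⟩ ≤ hstar ⟨2*i-1, hb⟩) := by
    rw [not_le, Fin.lt_def, hstar_val _ hb, hstar_val _ hx, hρx, hρb]
    omega
  have hCA : ¬ (hstar ⟨2*i, ha⟩ ≤ hstar ⟨c, hcb⟩) := by
    rw [not_le, Fin.lt_def, hstar_val _ hcb, hstar_val _ ha, hρc, hρa]
    omega
  -- cover facts about w'
  have covXB : SnakeCov n (swapFrom w i) (2*i+2) (2*i-1) := xcov_w' n i w h2 hn hww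
  have covBC : SnakeCov n (swapFrom w i) (2*i-1) c := by
    rcases hsc with ⟨_, hcv⟩ | ⟨_, hcv⟩
    · rw [hcv]; exact bcov2 n i (swapFrom w i) h2 hn
    · rw [hcv]; exact bcov1 n i (swapFrom w i) h2 hn
  -- finiteness
  haveI fin1 : Finite (SnakePoset n (swapFrom w i) ≃ Fin (2*n+4)) :=
    inferInstanceAs (Finite (Fin (2*n+4) ≃ Fin (2*n+4)))
  haveI fin2 : Finite (SnakePoset n w ≃ Fin (2*n+4)) :=
    inferInstanceAs (Finite (Fin (2*n+4) ≃ Fin (2*n+4)))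
  haveI ft1 : Fintype {f : SnakePoset n (swapFrom w i) ≃ Fin (2*n+4) //
      ∀ a b, a ≤ b → f a ≤ f b} := Fintype.ofFinite _
  haveI ft2 : Fintype {f : SnakePoset n w ≃ Fin (2*n+4) //
      ∀ a b, a ≤ b → f a ≤ f b} := Fintype.ofFinite _
  unfold linExtCount
  rw [Nat.card_eq_fintype_card, Nat.card_eq_fintype_card]
  have hswfix : ∀ (z : ℕ) (hz : z < 2*n+4), z ≠ 2*i → z ≠ 2*i-1 →
      Equiv.swap (⟨2*i, ha⟩ : Fin (2*n+4)) ⟨2*i-1, hb⟩ ⟨z, hz⟩ = ⟨z, hz⟩ := by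
    intro z hz hz1 hz2
    exact Equiv.swap_apply_of_ne_of_ne
      (fun h => hz1 (congrArg Fin.val h)) (fun h => hz2 (congrArg Fin.val h))
  refine Fintype.card_lt_of_injective_of_notMem (Gmap n i w h2 hn hww hx ha hb) ?_
    (b := ⟨hstar, hstarExt⟩) ?_
  · -- injectivity
    intro F1 F2 hEq
    unfold Gmap at hEq
    by_cases c1 : F1.1 ⟨2*i+2, hx⟩ ≤ F1.1 ⟨2*i, ha⟩ <;>
      by_cases c2 : F2.1 ⟨2*i+2, hx⟩ ≤ F2.1 ⟨2*i, ha⟩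
    · rw [dif_pos c1, dif_pos c2] at hEq
      exact Subtype.ext (Subtype.mk_eq_mk.mp hEq)
    · rw [dif_pos c1, dif_neg c2] at hEq
      exfalso
      have hv : F1.1 = (Equiv.swap (⟨2*i, ha⟩ : Fin (2*n+4)) ⟨2*i-1, hb⟩).trans F2.1 :=
        Subtype.mk_eq_mk.mp hEq
      have m1 : F1.1 ⟨2*i+2, hx⟩ ≤ F1.1 ⟨2*i-1, hb⟩ :=
        cov_of_isExt F1.2 _ _ hx hb covXB
      have e1 : F1.1 ⟨2*i+2, hx⟩ =
          F2.1 (Equiv.swap (⟨2*i, ha⟩ : Fin (2*n+4)) ⟨2*i-1, hb⟩ ⟨2*i+2, hx⟩) :=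
        DFunLike.congr_fun hv ⟨2*i+2, hx⟩
      have e2 : F1.1 ⟨2*i-1, hb⟩ =
          F2.1 (Equiv.swap (⟨2*i, ha⟩ : Fin (2*n+4)) ⟨2*i-1, hb⟩ ⟨2*i-1, hb⟩) :=
        DFunLike.congr_fun hv ⟨2*i-1, hb⟩
      rw [hswfix (2*i+2) hx (by omega) (by omega)] at e1
      rw [Equiv.swap_apply_right] at e2
      rw [e1, e2] at m1
      exact c2 m1
    · rw [dif_neg c1, dif_pos c2] at hEq
      exfalso
      have hv : (Equiv.swap (⟨2*i, ha⟩ : Fin (2*n+4)) ⟨2*i-1, hb⟩).trans F1.1 = F2.1 :=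
        Subtype.mk_eq_mk.mp hEq
      have m2 : F2.1 ⟨2*i+2, hx⟩ ≤ F2.1 ⟨2*i-1, hb⟩ :=
        cov_of_isExt F2.2 _ _ hx hb covXB
      have e1 : F1.1 (Equiv.swap (⟨2*i, ha⟩ : Fin (2*n+4)) ⟨2*i-1, hb⟩ ⟨2*i+2, hx⟩) =
          F2.1 ⟨2*i+2, hx⟩ :=
        DFunLike.congr_fun hv ⟨2*i+2, hx⟩
      have e2 : F1.1 (Equiv.swap (⟨2*i, ha⟩ : Fin (2*n+4)) ⟨2*i-1, hb⟩ ⟨2*i-1, hb⟩) =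
          F2.1 ⟨2*i-1, hb⟩ :=
        DFunLike.congr_fun hv ⟨2*i-1, hb⟩
      rw [hswfix (2*i+2) hx (by omega) (by omega)] at e1
      rw [Equiv.swap_apply_right] at e2
      rw [← e1, ← e2] at m2
      exact c1 m2
    · rw [dif_neg c1, dif_neg c2] at hEq
      have hv : (Equiv.swap (⟨2*i, ha⟩ : Fin (2*n+4)) ⟨2*i-1, hb⟩).trans F1.1 =
          (Equiv.swap (⟨2*i, ha⟩ : Fin (2*n+4)) ⟨2*i-1, hb⟩).trans F2.1 :=
        Subtype.mk_eq_mk.mp hEq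
      apply Subtype.ext
      apply Equiv.ext
      intro z
      have h1 : F1.1 (Equiv.swap (⟨2*i, ha⟩ : Fin (2*n+4)) ⟨2*i-1, hb⟩
            (Equiv.swap (⟨2*i, ha⟩ : Fin (2*n+4)) ⟨2*i-1, hb⟩ z)) =
          F2.1 (Equiv.swap (⟨2*i, ha⟩ : Fin (2*n+4)) ⟨2*i-1, hb⟩
            (Equiv.swap (⟨2*i, ha⟩ : Fin (2*n+4)) ⟨2*i-1, hb⟩ z)) :=
        DFunLike.congr_fun hv
          (Equiv.swap (⟨2*i, ha⟩ : Fin (2*n+4)) ⟨2*i-1, hb⟩ z)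
      have hsz := Equiv.swap_apply_self (⟨2*i, ha⟩ : Fin (2*n+4)) ⟨2*i-1, hb⟩ z
      rwa [hsz] at h1
  · -- hstar is not in the range
    rw [Set.mem_range]
    rintro ⟨F', hEq⟩
    unfold Gmap at hEq
    by_cases c1 : F'.1 ⟨2*i+2, hx⟩ ≤ F'.1 ⟨2*i, ha⟩
    · rw [dif_pos c1] at hEq
      have hv : F'.1 = hstar := Subtype.mk_eq_mk.mp hEq
      have m1 : F'.1 ⟨2*i+2, hx⟩ ≤ F'.1 ⟨2*i-1, hb⟩ :=
        cov_of_isExt F'.2 _ _ hx hb covXB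
      rw [hv] at m1
      exact hBX m1
    · rw [dif_neg c1] at hEq
      have hv : (Equiv.swap (⟨2*i, ha⟩ : Fin (2*n+4)) ⟨2*i-1, hb⟩).trans F'.1 = hstar :=
        Subtype.mk_eq_mk.mp hEq
      have m2 : F'.1 ⟨2*i-1, hb⟩ ≤ F'.1 ⟨c, hcb⟩ :=
        cov_of_isExt F'.2 _ _ hb hcb covBC
      have e1 : F'.1 (Equiv.swap (⟨2*i, ha⟩ : Fin (2*n+4)) ⟨2*i-1, hb⟩ ⟨2*i, ha⟩) =
          hstar ⟨2*i, ha⟩ :=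
        DFunLike.congr_fun hv ⟨2*i, ha⟩
      have e2 : F'.1 (Equiv.swap (⟨2*i, ha⟩ : Fin (2*n+4)) ⟨2*i-1, hb⟩ ⟨c, hcb⟩) =
          hstar ⟨c, hcb⟩ :=
        DFunLike.congr_fun hv ⟨c, hcb⟩
      rw [Equiv.swap_apply_left] at e1
      rw [hswfix (c) hcb (by omega) (by omega)] at e2
      rw [e1, e2] at m2
      exact hCA m2

/-! ### The case `i = 1`: an order isomorphism -/

def tswap (z : ℕ) : ℕ := if z = 1 then 2 else if z = 2 then 1 else z

theorem tswap_invol (z : ℕ) : tswap (tswap z) = z := by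
  unfold tswap; split_ifs <;> first | omega | exact False.elim (by assumption)

theorem swapFrom_one_invol (w : ℕ → Letter) : swapFrom (swapFrom w 1) 1 = w := by
  funext j
  unfold swapFrom
  split_ifs with h
  · exact Letter.flip_flip (w j)
  · rfl

theorem cov_tswap (n : ℕ) (w : ℕ → Letter) (u v : ℕ) (h : SnakeCov n w u v) :
    SnakeCov n (swapFrom w 1) (tswap u) (tswap v) := by
  cases h with
  | cov10 =>
      rw [show tswap 1 = 2 from rfl, show tswap 0 = 0 from rfl]
      exact SnakeCov.cov20
  | cov20 =>
      rw [show tswap 2 = 1 from rfl, show tswap 0 = 0 from rfl]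
      exact SnakeCov.cov10
  | cov31 =>
      rw [show tswap 3 = 3 from rfl, show tswap 1 = 2 from rfl]
      exact SnakeCov.cov32
  | cov32 =>
      rw [show tswap 3 = 3 from rfl, show tswap 2 = 1 from rfl]
      exact SnakeCov.cov31
  | covOdd m h1 h2 =>
      have e1 : tswap (2*m+3) = 2*m+3 := by unfold tswap; split_ifs <;> first | omega | exact False.elim (by assumption)
      have e2 : tswap (2*m+1) = 2*m+1 := by unfold tswap; split_ifs <;> first | omega | exact False.elim (by assumption)
      rw [e1, e2]
      exact SnakeCov.covOdd m h1 h2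
  | covBot m h1 h2 =>
      have e1 : tswap (2*m+3) = 2*m+3 := by unfold tswap; split_ifs <;> first | omega | exact False.elim (by assumption)
      have e2 : tswap (2*m+2) = 2*m+2 := by unfold tswap; split_ifs <;> first | omega | exact False.elim (by assumption)
      rw [e1, e2]
      exact SnakeCov.covBot m h1 h2
  | covSide m h1 h2 =>
      have e1 : tswap (2*m+2) = 2*m+2 := by unfold tswap; split_ifs <;> first | omega | exact False.elim (by assumption)
      rw [e1]
      by_cases hm : m = 1
      · subst hm
        cases hw : w 1 with
        | L =>
            have hv : snakeSide w 1 = 1 := by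
              unfold snakeSide
              rw [if_pos (Or.inl ⟨rfl, hw⟩)]
            have hv' : snakeSide (swapFrom w 1) 1 = 2 := by
              unfold snakeSide
              rw [if_neg]
              rintro (⟨_, hL⟩ | ⟨hh, _⟩)
              · rw [show swapFrom w 1 1 = (w 1).flip from if_pos (le_refl 1), hw] at hL
                exact absurd hL (by decide)
              · omega
            have hc := SnakeCov.covSide (n := n) (w := swapFrom w 1) 1 h1 h2
            rw [hv'] at hc
            rw [hv, show tswap 1 = 2 from rfl]
            exact hc
        | R =>
            have hv : snakeSide w 1 = 2 := by
              unfold snakeSide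
              rw [if_neg]
              rintro (⟨_, hL⟩ | ⟨hh, _⟩)
              · rw [hw] at hL
                exact absurd hL (by decide)
              · omega
            have hswL : swapFrom w 1 1 = Letter.L := by
              rw [show swapFrom w 1 1 = (w 1).flip from if_pos (le_refl 1), hw]
              rfl
            have hv' : snakeSide (swapFrom w 1) 1 = 1 := by
              unfold snakeSide
              rw [if_pos (Or.inl ⟨rfl, hswL⟩)]
            have hc := SnakeCov.covSide (n := n) (w := swapFrom w 1) 1 h1 h2
            rw [hv'] at hc
            rw [hv, show tswap 2 = 1 from rfl]
            exact hc
      · have e2 : tswap (snakeSide w m) = snakeSide w m := by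
          rcases side_mem' w m with hv | hv <;> (unfold tswap; split_ifs <;> first | omega | exact False.elim (by assumption))
        rw [e2, ← side_swap_ne w 1 m (le_refl 1) hm]
        exact SnakeCov.covSide m h1 h2

theorem le_tswap (n : ℕ) (w : ℕ → Letter) (p q : ℕ) (h : SnakeLE n w p q) :
    SnakeLE n (swapFrom w 1) (tswap p) (tswap q) := by
  have h' : Relation.ReflTransGen (SnakeCov n w) p q := h
  clear h
  induction h' with
  | refl => exact Relation.ReflTransGen.refl
  | tail h1 h2 ih => exact Relation.ReflTransGen.tail ih (cov_tswap n w _ _ h2)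

theorem le_tswap' (n : ℕ) (w : ℕ → Letter) (p q : ℕ) (h : SnakeLE n (swapFrom w 1) p q) :
    SnakeLE n w (tswap p) (tswap q) := by
  have h' := le_tswap n (swapFrom w 1) p q h
  rwa [swapFrom_one_invol w] at h'

theorem tswap_lt {n : ℕ} (z : Fin (2*n+4)) : tswap z.1 < 2*n+4 := by
  have := z.2
  unfold tswap; split_ifs <;> first | omega | exact False.elim (by assumption)

def tauEquiv (n : ℕ) : Fin (2*n+4) ≃ Fin (2*n+4) where
  toFun z := ⟨tswap z.1, tswap_lt z⟩
  invFun z := ⟨tswap z.1, tswap_lt z⟩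
  left_inv z := Fin.ext (tswap_invol z.1)
  right_inv z := Fin.ext (tswap_invol z.1)

theorem eqAtOne (n : ℕ) (w : ℕ → Letter) :
    linExtCount n (swapFrom w 1) = linExtCount n w := by
  unfold linExtCount
  apply Nat.card_congr
  refine
    { toFun := fun F => ⟨(tauEquiv n).trans F.1, ?_⟩
      invFun := fun F => ⟨(tauEquiv n).trans F.1, ?_⟩
      left_inv := ?_
      right_inv := ?_ }
  · intro a b hab
    have h' : SnakeLE n (swapFrom w 1) (tswap a.1) (tswap b.1) := le_tswap n w a.1 b.1 hab
    exact F.2 ⟨tswap a.1, tswap_lt a⟩ ⟨tswap b.1, tswap_lt b⟩ h'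
  · intro a b hab
    have h' : SnakeLE n w (tswap a.1) (tswap b.1) := le_tswap' n w a.1 b.1 hab
    exact F.2 ⟨tswap a.1, tswap_lt a⟩ ⟨tswap b.1, tswap_lt b⟩ h'
  · intro F
    apply Subtype.ext
    apply Equiv.ext
    intro z
    simp only [Equiv.trans_apply]
    exact congrArg (fun x => F.1 x) (Fin.ext (tswap_invol z.1))
  · intro F
    apply Subtype.ext
    apply Equiv.ext
    intro z
    simp only [Equiv.trans_apply]
    exact congrArg (fun x => F.1 x) (Fin.ext (tswap_invol z.1))

end Aux

theorem stmt6 (n i : ℕ) (w : ℕ → Letter) (hi1 : 1 ≤ i) (hi2 : i ≤ n)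
    (h : i = 1 ∨ w (i - 1) = w i) :
    linExtCount n (swapFrom w i) ≤ linExtCount n w ∧
      (linExtCount n (swapFrom w i) = linExtCount n w ↔ i = 1) := by
  by_cases hi : i = 1
  · subst hi
    have hEq := eqAtOne n w
    exact ⟨le_of_eq hEq, ⟨fun _ => rfl, fun _ => hEq⟩⟩
  · have hww : w (i - 1) = w i := h.resolve_left hi
    have h2 : 2 ≤ i := by omega
    have hlt := strictLt n i w h2 hi2 hww
    exact ⟨le_of_lt hlt, ⟨fun hEq => absurd hEq (ne_of_lt hlt), fun h1 => absurd h1 hi⟩⟩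
end

section
/- For every generalized snake word w of length n, e(S_n) ≤ e(P(w)) ≤ e(𝓛_n), where S_n = P(εLRLR⋯) is the snake poset built from the alternating word of length n beginning with L and 𝓛_n = P(εLL⋯L) is the ladder poset built from the all-L word of length n; equivalently, the normalized volume of O(P(w)) is at least that of O(S_n) and at most that of O(𝓛_n). -/
namespace SnakeDev

open Relation

theorem snakeSide_le (w : ℕ → Letter) (m : ℕ) : snakeSide w m ≤ 2*m := by
  unfold snakeSide; split <;> omega

theorem snakeSide_choice (w : ℕ → Letter) (m : ℕ) (hm : 1 ≤ m) :
    snakeSide w m = 2*m - 1 ∨ snakeSide w m = 2*m := by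
  unfold snakeSide; split <;> omega

theorem cov_congr {n : ℕ} {w : ℕ → Letter} {a b a' b' : ℕ} (h : SnakeCov n w a b)
    (ha : a' = a) (hb : b' = b) : SnakeCov n w a' b' := by subst ha; subst hb; exact h

theorem cov_mono {n : ℕ} {w : ℕ → Letter} {a b : ℕ} (h : SnakeCov n w a b) :
    SnakeCov (n+1) w a b := by
  cases h with
  | cov10 => exact .cov10
  | cov20 => exact .cov20
  | cov31 => exact .cov31
  | cov32 => exact .cov32
  | covOdd m h1 h2 => exact .covOdd m h1 (by omega)
  | covBot m h1 h2 => exact .covBot m h1 (by omega)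
  | covSide m h1 h2 => exact .covSide m h1 (by omega)

theorem le_mono {n : ℕ} {w : ℕ → Letter} {a b : ℕ} (h : SnakeLE n w a b) :
    SnakeLE (n+1) w a b := Relation.ReflTransGen.mono (p := SnakeCov (n+1) w) (fun _ _ hc => cov_mono hc) a b h

theorem cov_restrict {n : ℕ} {w : ℕ → Letter} {a b : ℕ} (h : SnakeCov (n+1) w a b)
    (ha : a ≤ 2*n+3) : SnakeCov n w a b := by
  cases h with
  | cov10 => exact .cov10
  | cov20 => exact .cov20
  | cov31 => exact .cov31
  | cov32 => exact .cov32
  | covOdd m h1 h2 => exact .covOdd m h1 (by omega)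
  | covBot m h1 h2 => exact .covBot m h1 (by omega)
  | covSide m h1 h2 => exact .covSide m h1 (by omega)

theorem le_restrict {n : ℕ} {w : ℕ → Letter} {b : ℕ} :
    ∀ {a}, SnakeLE (n+1) w a b → a ≤ 2*n+3 → SnakeLE n w a b := by
  intro a h
  induction h using Relation.ReflTransGen.head_induction_on with
  | refl => intro _; exact .refl
  | head h' hrest ih =>
      intro ha
      have hlt := snakeCov_lt h'
      exact .head (cov_restrict h' ha) (ih (by omega))

theorem min_le (n : ℕ) (w : ℕ → Letter) : ∀ x, x ≤ 2*n+3 → SnakeLE n w (2*n+3) x := by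
  induction n with
  | zero =>
    intro x hx
    interval_cases x
    · exact .head .cov31 (.single .cov10)
    · exact .single .cov31
    · exact .single .cov32
    · exact .refl
  | succ n ih =>
    intro x hx
    rcases Nat.lt_or_ge x (2*n+4) with h | h
    · have h1 : SnakeCov (n+1) w (2*(n+1)+3) (2*n+3) :=
        cov_congr (SnakeCov.covOdd (n := n+1) (w := w) (n+1) (by omega) (by omega))
          (by ring) (by omega)
      exact .head h1 (le_mono (ih x (by omega)))
    · have hx' : x = 2*n+4 ∨ x = 2*n+5 := by omega
      rcases hx' with rfl | rfl
      · exact .single (cov_congr (SnakeCov.covBot (n := n+1) (w := w) (n+1) (by omega) (by omega))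
          (by ring) (by omega))
      · exact (Relation.ReflTransGen.mono (r := SnakeCov (n+1) w) (p := SnakeCov (n+1) w) (fun _ _ h => h) (2*(n+1)+3) (2*(n+1)+3) Relation.ReflTransGen.refl) |>.trans
          (by have : (2*(n+1)+3) = 2*n+5 := by ring
              rw [this])

theorem no_cov_to_min {n : ℕ} {w : ℕ → Letter} {a b : ℕ} (h : SnakeCov n w a b)
    (hb : b = 2*n+3) : False := by
  have hs := snakeSide_le w
  cases h with
  | cov10 => omega
  | cov20 => omega
  | cov31 => omega
  | cov32 => omega
  | covOdd m h1 h2 => omega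
  | covBot m h1 h2 => omega
  | covSide m h1 h2 => have := hs m; omega

theorem le_to_min {n : ℕ} {w : ℕ → Letter} {a b : ℕ} (h : SnakeLE n w a b)
    (hb : b = 2*n+3) : a = b := by
  rcases h.cases_tail with he | ⟨c, hac, hcb⟩
  · omega
  · exact absurd hb (fun hb => no_cov_to_min hcb hb)

theorem cov_to_u {n : ℕ} {w : ℕ → Letter} {a b : ℕ} (h : SnakeCov (n+1) w a b)
    (hb : b = 2*n+4) : a = 2*n+5 := by
  have hs := snakeSide_le w
  cases h with
  | cov10 => omega
  | cov20 => omega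
  | cov31 => omega
  | cov32 => omega
  | covOdd m h1 h2 => omega
  | covBot m h1 h2 => omega
  | covSide m h1 h2 => have := hs m; omega

theorem le_to_u {n : ℕ} {w : ℕ → Letter} {a b : ℕ} (h : SnakeLE (n+1) w a b)
    (hb : b = 2*n+4) : a = b ∨ a = 2*n+5 := by
  rcases h.cases_tail with he | ⟨c, hac, hcb⟩
  · left; omega
  · right
    have hc : c = 2*n+5 := cov_to_u hcb hb
    have := le_to_min hac (by omega)
    omega

theorem cov_to_prevmin {n : ℕ} {w : ℕ → Letter} {a b : ℕ} (h : SnakeCov (n+1) w a b)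
    (hb : b = 2*n+3) : a = 2*n+5 := by
  have hs := snakeSide_le w
  cases h with
  | cov10 => omega
  | cov20 => omega
  | cov31 => omega
  | cov32 => omega
  | covOdd m h1 h2 => omega
  | covBot m h1 h2 => omega
  | covSide m h1 h2 => have := hs m; omega

theorem le_to_prevmin {n : ℕ} {w : ℕ → Letter} {a b : ℕ} (h : SnakeLE (n+1) w a b)
    (hb : b = 2*n+3) : a = b ∨ a = 2*n+5 := by
  rcases h.cases_tail with he | ⟨c, hac, hcb⟩
  · left; omega
  · right
    have hc : c = 2*n+5 := cov_to_prevmin hcb hb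
    have := le_to_min hac (by omega)
    omega

theorem cov_from_u {n : ℕ} {w : ℕ → Letter} {a b : ℕ} (h : SnakeCov (n+1) w a b)
    (ha : a = 2*n+4) : b = snakeSide w (n+1) := by
  cases h with
  | cov10 => omega
  | cov20 => omega
  | cov31 => omega
  | cov32 => omega
  | covOdd m h1 h2 => omega
  | covBot m h1 h2 => omega
  | covSide m h1 h2 =>
      have hm : m = n+1 := by omega
      subst hm; rfl

theorem le_from_u {n : ℕ} {w : ℕ → Letter} {b : ℕ} (h : SnakeLE (n+1) w (2*n+4) b) :
    b = 2*n+4 ∨ SnakeLE n w (snakeSide w (n+1)) b := by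
  rcases h.cases_head with he | ⟨c, hc, hcb⟩
  · left; omega
  · right
    have hc' : c = snakeSide w (n+1) := cov_from_u hc rfl
    subst hc'
    exact le_restrict hcb (by have := snakeSide_le w (n+1); omega)

theorem le_from_u' {n : ℕ} {w : ℕ → Letter} {b : ℕ}
    (h : SnakeLE n w (snakeSide w (n+1)) b) : SnakeLE (n+1) w (2*n+4) b :=
  .head (cov_congr (SnakeCov.covSide (n := n+1) (w := w) (n+1) (by omega) (by omega))
    (by ring) rfl) (le_mono h)

/-- 2n+3 (the old minimum) is below every old element in `P(n+1)`. -/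
theorem min_prev {n : ℕ} {w : ℕ → Letter} {x : ℕ} (hx : x ≤ 2*n+3) :
    SnakeLE (n+1) w (2*n+3) x := le_mono (min_le n w x hx)

/-- the maximum 0. -/
theorem le_zero (n : ℕ) (w : ℕ → Letter) : ∀ x, x ≤ 2*n+3 → SnakeLE n w x 0 := by
  intro x hx
  induction x using Nat.strong_induction_on with
  | _ x ih =>
    match x, hx with
    | 0, _ => exact .refl
    | 1, _ => exact .single .cov10
    | 2, _ => exact .single .cov20
    | 3, _ => exact .head .cov31 (.single .cov10)
    | (m+4), hx =>
      rcases Nat.even_or_odd m with ⟨j, hj⟩ | ⟨j, hj⟩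
      · -- m+4 = 2j+4 even: 2(j+1)+2 : covSide to snakeSide w (j+1)
        have hcov : SnakeCov n w (m+4) (snakeSide w (j+1)) :=
          cov_congr (SnakeCov.covSide (j+1) (by omega) (by omega)) (by omega) rfl
        have hside := snakeSide_le w (j+1)
        exact .head hcov (ih _ (by omega) (by omega))
      · -- m+4 = 2j+5 odd: 2(j+1)+3: covOdd to 2(j+1)+1
        have hcov : SnakeCov n w (m+4) (2*(j+1)+1) :=
          cov_congr (SnakeCov.covOdd (j+1) (by omega) (by omega)) (by omega) rfl
        exact .head hcov (ih _ (by omega) (by omega))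


instance (n : ℕ) (w : ℕ → Letter) : Fintype (SnakePoset n w) :=
  inferInstanceAs (Fintype (Fin (2*n+4)))

instance (n : ℕ) (w : ℕ → Letter) : Finite (SnakePoset n w) :=
  inferInstanceAs (Finite (Fin (2*n+4)))

/-- The subtype of linear extensions. -/
abbrev Ext (n : ℕ) (w : ℕ → Letter) :=
  {f : SnakePoset n w ≃ Fin (2 * n + 4) // ∀ a b : SnakePoset n w, a ≤ b → f a ≤ f b}

def elem (n : ℕ) (w : ℕ → Letter) (k : ℕ) (h : k < 2*n+4) : SnakePoset n w :=
  (⟨k, h⟩ : Fin (2*n+4))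

theorem elem_val (n : ℕ) (w : ℕ → Letter) (k : ℕ) (h : k < 2*n+4) :
    (elem n w k h : Fin (2*n+4)).1 = k := rfl

theorem le_iff {n : ℕ} {w : ℕ → Letter} (a b : SnakePoset n w) :
    a ≤ b ↔ SnakeLE n w (a : Fin (2*n+4)).1 (b : Fin (2*n+4)).1 := Iff.rfl

/-- value of an extension at a numeric point. -/
def fval {n : ℕ} {w : ℕ → Letter} (f : Ext n w) (x : ℕ) : ℕ :=
  if h : x < 2*n+4 then (f.1 (elem n w x h)).1 else 0

theorem fval_lt {n : ℕ} {w : ℕ → Letter} (f : Ext n w) {x : ℕ} (h : x < 2*n+4) :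
    fval f x < 2*n+4 := by
  unfold fval; rw [dif_pos h]; exact (f.1 _).2

theorem fval_inj {n : ℕ} {w : ℕ → Letter} (f : Ext n w) {x y : ℕ}
    (hx : x < 2*n+4) (hy : y < 2*n+4) (hxy : x ≠ y) : fval f x ≠ fval f y := by
  unfold fval; rw [dif_pos hx, dif_pos hy]
  intro h
  have := f.1.injective (Fin.ext h : f.1 (elem n w x hx) = f.1 (elem n w y hy))
  have : (elem n w x hx : Fin (2*n+4)).1 = (elem n w y hy : Fin (2*n+4)).1 := by rw [this]
  exact hxy this

theorem fval_mono {n : ℕ} {w : ℕ → Letter} (f : Ext n w) {x y : ℕ}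
    (hx : x < 2*n+4) (hle : SnakeLE n w x y) : fval f x ≤ fval f y := by
  have hy : y < 2*n+4 := by have := snakeLE_le hle; omega
  have h := f.2 (elem n w x hx) (elem n w y hy) hle
  unfold fval
  rw [dif_pos hx, dif_pos hy]
  exact h

theorem fval_min {n : ℕ} {w : ℕ → Letter} (f : Ext n w) : fval f (2*n+3) = 0 := by
  set x := f.1.symm ⟨0, by omega⟩ with hx
  have h0 : (f.1 x).1 = 0 := by rw [hx, Equiv.apply_symm_apply]
  have hxlt : (x : Fin (2*n+4)).1 < 2*n+4 := x.2
  have hmin : SnakeLE n w (2*n+3) (x : Fin (2*n+4)).1 := min_le n w _ (by omega)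
  have := fval_mono f (x := 2*n+3) (y := (x : Fin (2*n+4)).1) (by omega) hmin
  have hfx : fval f (x : Fin (2*n+4)).1 = 0 := by
    unfold fval; rw [dif_pos hxlt]
    have : elem n w (x : Fin (2*n+4)).1 hxlt = x := by
      apply Fin.ext; rfl
    rw [this, h0]
  omega

theorem fval_max {n : ℕ} {w : ℕ → Letter} (f : Ext n w) : fval f 0 = 2*n+3 := by
  set x := f.1.symm ⟨2*n+3, by omega⟩ with hx
  have h0 : (f.1 x).1 = 2*n+3 := by rw [hx, Equiv.apply_symm_apply]
  have hxlt : (x : Fin (2*n+4)).1 < 2*n+4 := x.2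
  have hmax : SnakeLE n w (x : Fin (2*n+4)).1 0 := le_zero n w _ (by omega)
  have h1 := fval_mono f (x := (x : Fin (2*n+4)).1) hxlt hmax
  have hfx : fval f (x : Fin (2*n+4)).1 = 2*n+3 := by
    unfold fval; rw [dif_pos hxlt]
    have : elem n w (x : Fin (2*n+4)).1 hxlt = x := by
      apply Fin.ext; rfl
    rw [this, h0]
  have h2 := fval_lt f (x := 0) (by omega)
  omega

noncomputable def mkExt (n : ℕ) (w : ℕ → Letter) (v : ℕ → ℕ)
    (hb : ∀ x, x < 2*n+4 → v x < 2*n+4)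
    (hinj : ∀ x y, x < 2*n+4 → y < 2*n+4 → v x = v y → x = y)
    (hmono : ∀ a b, a < 2*n+4 → SnakeLE n w a b → v a ≤ v b) : Ext n w :=
  ⟨Equiv.ofBijective
    (fun x : SnakePoset n w => (⟨v (x : Fin (2*n+4)).1, hb _ (x : Fin (2*n+4)).2⟩ : Fin (2*n+4)))
    (by
      rw [Fintype.bijective_iff_injective_and_card]
      refine ⟨?_, rfl⟩
      intro x y hxy
      have h1 : v (x : Fin (2*n+4)).1 = v (y : Fin (2*n+4)).1 := congrArg Fin.val hxy
      have h2 := hinj _ _ (x : Fin (2*n+4)).2 (y : Fin (2*n+4)).2 h1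
      exact Fin.ext h2),
   by
    intro a b hab
    exact hmono _ _ (a : Fin (2*n+4)).2 hab⟩

theorem fval_mkExt (n : ℕ) (w : ℕ → Letter) (v : ℕ → ℕ) (hb) (hinj) (hmono) (x : ℕ)
    (hx : x < 2*n+4) : fval (mkExt n w v hb hinj hmono) x = v x := by
  unfold fval
  rw [dif_pos hx]
  rfl

/-- every value is attained at some point `< 2n+4`. -/
theorem fval_surj {n : ℕ} {w : ℕ → Letter} (f : Ext n w) {v : ℕ} (hv : v < 2*n+4) :
    ∃ x, x < 2*n+4 ∧ fval f x = v := by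
  set x := f.1.symm ⟨v, hv⟩ with hx
  refine ⟨(x : Fin (2*n+4)).1, (x : Fin (2*n+4)).2, ?_⟩
  unfold fval
  rw [dif_pos (x : Fin (2*n+4)).2]
  have : elem n w (x : Fin (2*n+4)).1 (x : Fin (2*n+4)).2 = x := by apply Fin.ext; rfl
  rw [this, hx, Equiv.apply_symm_apply]

theorem fval_apply {n : ℕ} {w : ℕ → Letter} (f : Ext n w) (x : SnakePoset n w) :
    (f.1 x).1 = fval f (x : Fin (2*n+4)).1 := by
  unfold fval
  rw [dif_pos (x : Fin (2*n+4)).2]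
  congr 1

theorem ext_fval {n : ℕ} {w : ℕ → Letter} {f g : Ext n w}
    (h : ∀ x, x < 2*n+4 → fval f x = fval g x) : f = g := by
  apply Subtype.ext
  apply Equiv.ext
  intro x
  apply Fin.ext
  rw [fval_apply f x, fval_apply g x]
  exact h _ (x : Fin (2*n+4)).2

-- convenient restatements at level n+1
theorem fval_min' {n : ℕ} {w : ℕ → Letter} (f : Ext (n+1) w) : fval f (2*n+5) = 0 := by
  have h := fval_min f
  have e : 2*(n+1)+3 = 2*n+5 := by ring
  rwa [e] at h

theorem fval_lt' {n : ℕ} {w : ℕ → Letter} (f : Ext (n+1) w) {x : ℕ} (h : x < 2*n+6) :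
    fval f x < 2*n+6 := by
  have := fval_lt f (x := x) (by omega)
  omega

theorem fval_ne_min' {n : ℕ} {w : ℕ → Letter} (f : Ext (n+1) w) {x : ℕ} (h : x < 2*n+5) :
    fval f x ≠ 0 := by
  have h1 := fval_inj f (x := x) (y := 2*n+5) (by omega) (by omega) (by omega)
  rw [fval_min'] at h1
  exact h1

theorem side_pos {w : ℕ → Letter} {m : ℕ} (hm : 1 ≤ m) : 1 ≤ snakeSide w m := by
  unfold snakeSide; split <;> omega

noncomputable def stepDown (n : ℕ) (w : ℕ → Letter) (k : ℕ) (f : Ext (n+1) w)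
    (hf : fval f (2*n+4) = k+1) : Ext n w :=
  mkExt n w (fun x => fval f x - 1 - (if k+1 < fval f x then 1 else 0))
    (by
      intro x hx
      have h0 : fval f x ≠ 0 := fval_ne_min' f (by omega)
      have h1 : fval f x ≠ k+1 := by
        have := fval_inj f (x := x) (y := 2*n+4) (by omega) (by omega) (by omega)
        rw [hf] at this; exact this
      have h2 : fval f x < 2*n+6 := fval_lt' f (by omega)
      have hk : k + 1 < 2*n+6 := by rw [← hf]; exact fval_lt' f (by omega)
      split <;> omega)
    (by
      intro x y hx hy hxy
      by_contra hne
      have := fval_inj f (x := x) (y := y) (by omega) (by omega) hne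
      have h0x : fval f x ≠ 0 := fval_ne_min' f (by omega)
      have h0y : fval f y ≠ 0 := fval_ne_min' f (by omega)
      have h1x : fval f x ≠ k+1 := by
        have := fval_inj f (x := x) (y := 2*n+4) (by omega) (by omega) (by omega)
        rw [hf] at this; exact this
      have h1y : fval f y ≠ k+1 := by
        have := fval_inj f (x := y) (y := 2*n+4) (by omega) (by omega) (by omega)
        rw [hf] at this; exact this
      revert hxy this
      split <;> split <;> omega)
    (by
      intro a b ha hle
      have hb : b ≤ a := snakeLE_le hle
      have hmono := fval_mono f (x := a) (y := b) (by omega) (le_mono hle)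
      have h1 : fval f a ≠ k+1 := by
        have := fval_inj f (x := a) (y := 2*n+4) (by omega) (by omega) (by omega)
        rw [hf] at this; exact this
      have h2 : fval f b ≠ k+1 := by
        have := fval_inj f (x := b) (y := 2*n+4) (by omega) (by omega) (by omega)
        rw [hf] at this; exact this
      split <;> split <;> omega)

theorem stepDown_fval (n : ℕ) (w : ℕ → Letter) (k : ℕ) (f : Ext (n+1) w)
    (hf : fval f (2*n+4) = k+1) {x : ℕ} (hx : x < 2*n+4) :
    fval (stepDown n w k f hf) x = fval f x - 1 - (if k+1 < fval f x then 1 else 0) := by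
  unfold stepDown
  rw [fval_mkExt _ _ _ _ _ _ _ hx]

theorem side_lt {w : ℕ → Letter} (n : ℕ) : snakeSide w (n+1) < 2*n+4 := by
  have := snakeSide_le w (n+1); omega

theorem side_ne_min {w : ℕ → Letter} (n : ℕ) : snakeSide w (n+1) ≠ 2*n+3 := by
  rcases snakeSide_choice w (n+1) (by omega) with h | h <;> omega

/-- the side element has positive value in any extension of `P(w,n)`. -/
theorem fval_side_pos {n : ℕ} {w : ℕ → Letter} (g : Ext n w) :
    1 ≤ fval g (snakeSide w (n+1)) := by
  have h1 := fval_inj g (x := snakeSide w (n+1)) (y := 2*n+3)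
    (by have := side_lt (w := w) n; omega) (by omega) (side_ne_min n)
  rw [fval_min] at h1
  omega

noncomputable def stepUp (n : ℕ) (w : ℕ → Letter) (k : ℕ) (g : Ext n w)
    (hg : k ≤ fval g (snakeSide w (n+1))) : Ext (n+1) w := by
  have hk : k < 2*n+4 := by
    have := fval_lt g (side_lt (w := w) n); omega
  refine mkExt (n+1) w
    (fun x => if x = 2*n+5 then 0 else if x = 2*n+4 then k+1
      else fval g x + 1 + (if k ≤ fval g x then 1 else 0)) ?_ ?_ ?_
  · intro x hx
    have e : 2*(n+1)+4 = 2*n+6 := by ring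
    rw [e] at hx ⊢
    have hb : x < 2*n+4 → fval g x < 2*n+4 := fun h => fval_lt g h
    split_ifs <;> omega
  · intro x y hx hy hxy
    have e : 2*(n+1)+4 = 2*n+6 := by ring
    rw [e] at hx hy
    by_contra hne
    split_ifs at hxy <;>
      first
      | omega
      | (have := fval_inj g (x := x) (y := y) (by omega) (by omega) hne; omega)
  · intro a b ha hle
    have e : 2*(n+1)+4 = 2*n+6 := by ring
    rw [e] at ha
    have hba : b ≤ a := snakeLE_le hle
    by_cases ha5 : a = 2*n+5
    · rw [if_pos ha5]; omega
    rw [if_neg ha5]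
    by_cases ha4 : a = 2*n+4
    · subst ha4
      rw [if_pos rfl]
      rcases le_from_u hle with rfl | hsb
      · rw [if_neg (by omega : ¬ (2*n+4 = 2*n+5)), if_pos rfl]
      · have hside := side_lt (w := w) n
        have hb_lt : b < 2*n+4 := by have := snakeLE_le hsb; omega
        rw [if_neg (by omega : ¬ b = 2*n+5), if_neg (by omega : ¬ b = 2*n+4)]
        have hm : fval g (snakeSide w (n+1)) ≤ fval g b := fval_mono g hside hsb
        split_ifs <;> omega
    · have ha' : a < 2*n+4 := by omega
      have hb' : b < 2*n+4 := by omega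
      have hle' : SnakeLE n w a b := le_restrict hle (by omega)
      have hm : fval g a ≤ fval g b := fval_mono g ha' hle'
      rw [if_neg ha4, if_neg (by omega : ¬ b = 2*n+5), if_neg (by omega : ¬ b = 2*n+4)]
      split_ifs <;> omega

theorem stepUp_fval (n : ℕ) (w : ℕ → Letter) (k : ℕ) (g : Ext n w)
    (hg : k ≤ fval g (snakeSide w (n+1))) {x : ℕ} (hx : x < 2*n+6) :
    fval (stepUp n w k g hg) x = (if x = 2*n+5 then 0 else if x = 2*n+4 then k+1
      else fval g x + 1 + (if k ≤ fval g x then 1 else 0)) := by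
  unfold stepUp
  rw [fval_mkExt _ _ _ _ _ _ _ (by omega : x < 2*(n+1)+4)]

theorem fval_side_ne {n : ℕ} {w : ℕ → Letter} (f : Ext (n+1) w) {k : ℕ}
    (hf : fval f (2*n+4) = k+1) : fval f (snakeSide w (n+1)) ≠ k + 1 := by
  have hside := side_lt (w := w) n
  have := fval_inj f (x := snakeSide w (n+1)) (y := 2*n+4) (by omega) (by omega) (by omega)
  rw [hf] at this; exact this

theorem stepDown_side (n : ℕ) (w : ℕ → Letter) (k : ℕ) (f : Ext (n+1) w)
    (hf : fval f (2*n+4) = k+1) :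
    k ≤ fval (stepDown n w k f hf) (snakeSide w (n+1)) := by
  have hside := side_lt (w := w) n
  rw [stepDown_fval n w k f hf hside]
  have h1 : fval f (2*n+4) ≤ fval f (snakeSide w (n+1)) :=
    fval_mono f (by omega) (le_from_u' Relation.ReflTransGen.refl)
  have h2 := fval_side_ne f hf
  rw [hf] at h1
  split_ifs <;> omega

theorem stepUp_u (n : ℕ) (w : ℕ → Letter) (k : ℕ) (g : Ext n w)
    (hg : k ≤ fval g (snakeSide w (n+1))) :
    fval (stepUp n w k g hg) (2*n+4) = k+1 := by
  rw [stepUp_fval n w k g hg (by omega)]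
  rw [if_neg (by omega : ¬ (2*n+4 = 2*n+5)), if_pos rfl]

noncomputable def keyEquiv (n : ℕ) (w : ℕ → Letter) (k : ℕ) :
    {f : Ext (n+1) w // fval f (2*n+4) = k+1} ≃
      {g : Ext n w // k ≤ fval g (snakeSide w (n+1))} where
  toFun p := ⟨stepDown n w k p.1 p.2, stepDown_side n w k p.1 p.2⟩
  invFun q := ⟨stepUp n w k q.1 q.2, stepUp_u n w k q.1 q.2⟩
  left_inv p := by
    apply Subtype.ext
    apply ext_fval
    intro x hx
    have hx' : x < 2*n+6 := by omega
    rw [stepUp_fval _ _ _ _ _ hx']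
    by_cases h5 : x = 2*n+5
    · rw [if_pos h5, h5, fval_min' p.1]
    rw [if_neg h5]
    by_cases h4 : x = 2*n+4
    · rw [if_pos h4, h4, p.2]
    rw [if_neg h4]
    have hxo : x < 2*n+4 := by omega
    rw [stepDown_fval n w k p.1 p.2 hxo]
    have h0 : fval p.1 x ≠ 0 := fval_ne_min' p.1 (by omega)
    have h1 : fval p.1 x ≠ k+1 := by
      have := fval_inj p.1 (x := x) (y := 2*n+4) (by omega) (by omega) (by omega)
      rw [p.2] at this; exact this
    split_ifs <;> omega
  right_inv q := by
    apply Subtype.ext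
    apply ext_fval
    intro x hx
    rw [stepDown_fval n w k _ (stepUp_u n w k q.1 q.2) hx]
    rw [stepUp_fval n w k q.1 q.2 (by omega)]
    rw [if_neg (by omega : ¬ x = 2*n+5), if_neg (by omega : ¬ x = 2*n+4)]
    split_ifs <;> omega

example (n : ℕ) (w : ℕ → Letter) : Finite (Ext n w) := inferInstance

noncomputable def Dc (n : ℕ) (w : ℕ → Letter) (k : ℕ) : ℕ :=
  Nat.card {f : Ext n w // fval f (2*n+2) = k}

noncomputable def Gc (n : ℕ) (w : ℕ → Letter) (k : ℕ) : ℕ :=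
  Nat.card {f : Ext n w // k ≤ fval f (2*n+2)}

noncomputable def Hs (n : ℕ) (w : ℕ → Letter) (k : ℕ) : ℕ :=
  Nat.card {f : Ext n w // k ≤ fval f (snakeSide w (n+1))}

noncomputable def eC (n : ℕ) (w : ℕ → Letter) : ℕ := Nat.card (Ext n w)

theorem card_split {α : Type*} [Finite α] (v : α → ℕ) (k : ℕ) :
    Nat.card {a : α // k ≤ v a} =
      Nat.card {a : α // v a = k} + Nat.card {a : α // k+1 ≤ v a} := by
  rw [← Nat.card_sum]
  apply Nat.card_congr
  refine
    { toFun := fun a => if h : v a.1 = k then Sum.inl ⟨a.1, h⟩ else Sum.inr ⟨a.1, by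
        have := a.2; omega⟩,
      invFun := fun x => match x with
        | Sum.inl a => ⟨a.1, by omega⟩
        | Sum.inr a => ⟨a.1, by have := a.2; omega⟩,
      left_inv := ?_, right_inv := ?_ }
  · intro a
    by_cases h : v a.1 = k
    · simp only [dif_pos h]
    · simp only [dif_neg h]
  · intro x
    match x with
    | Sum.inl a => simp only [dif_pos a.2]
    | Sum.inr a =>
        have : ¬ v a.1 = k := by have := a.2; omega
        simp only [dif_neg this]

theorem Gc_rec (n : ℕ) (w : ℕ → Letter) (k : ℕ) :
    Gc n w k = Dc n w k + Gc n w (k+1) := card_split _ _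

theorem Gc_zero (n : ℕ) (w : ℕ → Letter) {k : ℕ} (hk : 2*n+4 ≤ k) : Gc n w k = 0 := by
  have : IsEmpty {f : Ext n w // k ≤ fval f (2*n+2)} := by
    refine ⟨fun p => ?_⟩
    have := fval_lt p.1 (x := 2*n+2) (by omega)
    have := p.2
    omega
  exact Nat.card_of_isEmpty

theorem Dc_zero (n : ℕ) (w : ℕ → Letter) : Dc n w 0 = 0 := by
  have : IsEmpty {f : Ext n w // fval f (2*n+2) = 0} := by
    refine ⟨fun p => ?_⟩
    have h := fval_inj p.1 (x := 2*n+2) (y := 2*n+3) (by omega) (by omega) (by omega)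
    rw [fval_min, p.2] at h
    exact h rfl
  exact Nat.card_of_isEmpty

theorem Gc_card (n : ℕ) (w : ℕ → Letter) : Gc n w 0 = eC n w :=
  Nat.card_congr (Equiv.subtypeUnivEquiv (fun _ => Nat.zero_le _))

theorem Hs_zero (n : ℕ) (w : ℕ → Letter) : Hs n w 0 = eC n w :=
  Nat.card_congr (Equiv.subtypeUnivEquiv (fun _ => Nat.zero_le _))

theorem Hs_one (n : ℕ) (w : ℕ → Letter) : Hs n w 1 = eC n w :=
  Nat.card_congr (Equiv.subtypeUnivEquiv (fun f => fval_side_pos f))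

theorem Dc_succ (n : ℕ) (w : ℕ → Letter) (k : ℕ) :
    Dc (n+1) w (k+1) = Hs n w k := by
  unfold Dc Hs
  have e1 : ∀ f : Ext (n+1) w, fval f (2*(n+1)+2) = k+1 ↔ fval f (2*n+4) = k+1 := by
    intro f
    rw [show 2*(n+1)+2 = 2*n+4 by ring]
  rw [Nat.card_congr (Equiv.subtypeEquivRight e1)]
  exact Nat.card_congr (keyEquiv n w k)

theorem Hs_straight (n : ℕ) (w : ℕ → Letter) (k : ℕ)
    (hside : snakeSide w (n+1) = 2*n+2) : Hs n w k = Gc n w k := by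
  unfold Hs Gc
  apply Nat.card_congr
  apply Equiv.subtypeEquivRight
  intro f
  rw [hside]

/-- the pigeonhole facts about the previous minimum `2n+3` inside `P(w, n+1)`. -/
theorem prevmin_vals {n : ℕ} {w : ℕ → Letter} (f : Ext (n+1) w) :
    1 ≤ fval f (2*n+3) ∧ fval f (2*n+3) ≤ 2 ∧
      (fval f (2*n+3) = 2 ↔ fval f (2*n+4) = 1) := by
  have hA : ∀ x, x < 2*n+6 → fval f x < fval f (2*n+3) → x = 2*n+4 ∨ x = 2*n+5 := by
    intro x hx hlt
    by_contra hcon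
    have hx3 : x ≤ 2*n+3 := by omega
    have hle : SnakeLE (n+1) w (2*n+3) x := min_prev (by omega)
    have := fval_mono f (x := 2*n+3) (y := x) (by omega) hle
    omega
  have h5 : fval f (2*n+5) = 0 := fval_min' f
  have h1 : 1 ≤ fval f (2*n+3) := by
    have := fval_ne_min' f (x := 2*n+3) (by omega)
    omega
  have h2 : fval f (2*n+3) ≤ 2 := by
    by_contra hgt
    obtain ⟨x1, hx1, hv1⟩ := fval_surj f (v := 1) (by omega)
    obtain ⟨x2, hx2, hv2⟩ := fval_surj f (v := 2) (by omega)
    have e1 := hA x1 (by omega) (by omega)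
    have e2 := hA x2 (by omega) (by omega)
    have : x1 ≠ 2*n+5 := by intro h; rw [h, h5] at hv1; omega
    have : x2 ≠ 2*n+5 := by intro h; rw [h, h5] at hv2; omega
    have hx14 : x1 = 2*n+4 := by omega
    have hx24 : x2 = 2*n+4 := by omega
    rw [hx14] at hv1; rw [hx24] at hv2; omega
  refine ⟨h1, h2, ?_, ?_⟩
  · intro hv
    obtain ⟨x1, hx1, hv1⟩ := fval_surj f (v := 1) (by omega)
    have e1 := hA x1 (by omega) (by omega)
    have : x1 ≠ 2*n+5 := by intro h; rw [h, h5] at hv1; omega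
    have hx14 : x1 = 2*n+4 := by omega
    rw [hx14] at hv1; exact hv1
  · intro hv
    have hne := fval_inj f (x := 2*n+3) (y := 2*n+4) (by omega) (by omega) (by omega)
    rw [hv] at hne
    omega

theorem Hs_turn2 (n : ℕ) (w : ℕ → Letter)
    (hside : snakeSide w (n+2) = 2*n+3) : Hs (n+1) w 2 = Dc (n+1) w 1 := by
  unfold Hs Dc
  apply Nat.card_congr
  apply Equiv.subtypeEquivRight
  intro f
  rw [show snakeSide w ((n+1)+1) = 2*n+3 from hside]
  have h := prevmin_vals f
  rw [show 2*(n+1)+2 = 2*n+4 by ring]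
  constructor
  · intro h2; exact h.2.2.1 (by omega)
  · intro h4; have := h.2.2.2 h4; omega

theorem Hs_turn3 (n : ℕ) (w : ℕ → Letter) {k : ℕ} (hk : 3 ≤ k)
    (hside : snakeSide w (n+2) = 2*n+3) : Hs (n+1) w k = 0 := by
  have : IsEmpty {f : Ext (n+1) w // k ≤ fval f (snakeSide w ((n+1)+1))} := by
    refine ⟨fun p => ?_⟩
    obtain ⟨f, hp⟩ := p
    rw [show snakeSide w ((n+1)+1) = 2*n+3 from hside] at hp
    have := (prevmin_vals f).2.1
    omega
  exact Nat.card_of_isEmpty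

theorem cov0 {w : ℕ → Letter} {a b : ℕ} (h : SnakeCov 0 w a b) :
    (a = 1 ∧ b = 0) ∨ (a = 2 ∧ b = 0) ∨ (a = 3 ∧ b = 1) ∨ (a = 3 ∧ b = 2) := by
  cases h with
  | cov10 => omega
  | cov20 => omega
  | cov31 => omega
  | cov32 => omega
  | covOdd m h1 h2 => omega
  | covBot m h1 h2 => omega
  | covSide m h1 h2 => omega

theorem le0 {w : ℕ → Letter} {a b : ℕ} (h : SnakeLE 0 w a b) :
    a = b ∨ b = 0 ∨ (a = 3 ∧ (b = 1 ∨ b = 2)) := by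
  induction h with
  | refl => omega
  | tail hab hbc ih => have := cov0 hbc; omega

noncomputable def gA (w : ℕ → Letter) : Ext 0 w :=
  mkExt 0 w (fun x => if x = 0 then 3 else if x = 3 then 0 else x)
    (by intro x hx; split_ifs <;> omega)
    (by intro x y hx hy hxy; split_ifs at hxy <;> omega)
    (by intro a b ha hle; have := le0 hle; split_ifs <;> omega)

noncomputable def gB (w : ℕ → Letter) : Ext 0 w :=
  mkExt 0 w (fun x => if x = 0 then 3 else if x = 3 then 0 else 3 - x)
    (by intro x hx; split_ifs <;> omega)
    (by intro x y hx hy hxy; split_ifs at hxy <;> omega)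
    (by intro a b ha hle; have := le0 hle; split_ifs <;> omega)

theorem fval_gA1 (w : ℕ → Letter) : fval (gA w) 1 = 1 := by
  unfold gA; rw [fval_mkExt 0 w _ _ _ _ _ (by omega)]; norm_num
theorem fval_gA2 (w : ℕ → Letter) : fval (gA w) 2 = 2 := by
  unfold gA; rw [fval_mkExt 0 w _ _ _ _ _ (by omega)]; norm_num
theorem fval_gB1 (w : ℕ → Letter) : fval (gB w) 1 = 2 := by
  unfold gB; rw [fval_mkExt 0 w _ _ _ _ _ (by omega)]; norm_num
theorem fval_gB2 (w : ℕ → Letter) : fval (gB w) 2 = 1 := by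
  unfold gB; rw [fval_mkExt 0 w _ _ _ _ _ (by omega)]; norm_num

theorem vals0 {w : ℕ → Letter} (g : Ext 0 w) :
    fval g 0 = 3 ∧ fval g 3 = 0 ∧
      (fval g 1 = 1 ∧ fval g 2 = 2 ∨ fval g 1 = 2 ∧ fval g 2 = 1) := by
  have b1 : fval g 1 < 2*0+4 := fval_lt g (by omega)
  have b2 : fval g 2 < 2*0+4 := fval_lt g (by omega)
  have hmax : fval g 0 = 2*0+3 := fval_max g
  have hmin : fval g (2*0+3) = 0 := fval_min g
  have hmin' : fval g 3 = 0 := hmin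
  have i12 : fval g 1 ≠ fval g 2 := fval_inj g (by omega) (by omega) (by omega)
  have i10 : fval g 1 ≠ fval g 0 := fval_inj g (by omega) (by omega) (by omega)
  have i13 : fval g 1 ≠ fval g 3 := fval_inj g (by omega) (by omega) (by omega)
  have i20 : fval g 2 ≠ fval g 0 := fval_inj g (by omega) (by omega) (by omega)
  have i23 : fval g 2 ≠ fval g 3 := fval_inj g (by omega) (by omega) (by omega)
  omega

theorem ext0_unique {w : ℕ → Letter} (g g' : Ext 0 w) (h : fval g 1 = fval g' 1) :
    g = g' := by
  apply ext_fval
  intro x hx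
  have v1 := vals0 g
  have v2 := vals0 g'
  interval_cases x <;> omega

noncomputable def ext0Equiv (w : ℕ → Letter) : Ext 0 w ≃ Bool where
  toFun g := decide (fval g 1 = 1)
  invFun b := if b then gA w else gB w
  left_inv g := by
    by_cases h : fval g 1 = 1
    · have hd : decide (fval g 1 = 1) = true := decide_eq_true h
      dsimp only
      rw [hd]
      simp only [if_pos]
      exact ext0_unique (gA w) g (by rw [fval_gA1, h])
    · have : fval g 1 = 2 := by have := vals0 g; omega
      have hd : decide (fval g 1 = 1) = false := decide_eq_false h
      dsimp only
      rw [hd]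
      simp only [Bool.false_eq_true, if_false]
      exact ext0_unique (gB w) g (by rw [fval_gB1, this])
  right_inv b := by
    cases b
    · simp only [if_false, Bool.false_eq_true, fval_gB1]
      simp [fval_gB1]
    · simp [fval_gA1]

theorem eC0 (w : ℕ → Letter) : eC 0 w = 2 := by
  unfold eC
  rw [Nat.card_congr (ext0Equiv w), Nat.card_eq_fintype_card, Fintype.card_bool]

theorem card_val2 (w : ℕ → Letter) {s : ℕ} (hs : s = 1 ∨ s = 2) :
    Nat.card {g : Ext 0 w // fval g s = 2} = 1 := by
  rcases hs with rfl | rfl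
  · haveI : Unique {g : Ext 0 w // fval g 1 = 2} :=
      { default := ⟨gB w, fval_gB1 w⟩,
        uniq := fun a => Subtype.ext (ext0_unique a.1 (gB w) (by rw [a.2, fval_gB1])) }
    exact Nat.card_unique
  · haveI : Unique {g : Ext 0 w // fval g 2 = 2} :=
      { default := ⟨gA w, fval_gA2 w⟩,
        uniq := fun a => Subtype.ext (ext0_unique a.1 (gA w) (by
          have h1 := vals0 a.1
          have h2 := a.2
          rw [fval_gA1]
          omega)) }
    exact Nat.card_unique

theorem Hs0_eval (w : ℕ → Letter) (k : ℕ) :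
    Hs 0 w k = if k ≤ 1 then 2 else if k = 2 then 1 else 0 := by
  have hside : snakeSide w (0+1) = 1 ∨ snakeSide w (0+1) = 2 := by
    have := snakeSide_choice w (0+1) (by omega)
    omega
  rcases Nat.lt_or_ge k 2 with hk | hk
  · rw [if_pos (by omega)]
    interval_cases k
    · rw [Hs_zero, eC0]
    · rw [Hs_one, eC0]
  rcases Nat.lt_or_ge k 3 with hk3 | hk3
  · have hk2 : k = 2 := by omega
    subst hk2
    rw [if_neg (by omega), if_pos rfl]
    unfold Hs
    rw [Nat.card_congr (Equiv.subtypeEquivRight (q := fun g : Ext 0 w =>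
      fval g (snakeSide w (0+1)) = 2) (fun g => by
        have hv := vals0 g
        rcases hside with h | h <;> rw [h] <;> omega))]
    exact card_val2 w hside
  · rw [if_neg (by omega), if_neg (by omega)]
    have : IsEmpty {g : Ext 0 w // k ≤ fval g (snakeSide w (0+1))} := by
      refine ⟨fun p => ?_⟩
      obtain ⟨g, hp⟩ := p
      have hv := vals0 g
      rcases hside with h | h <;> rw [h] at hp <;> omega
    exact Nat.card_of_isEmpty

theorem alt_ne (n : ℕ) : altWord (n+1) ≠ altWord (n+2) := by
  unfold altWord
  have hpar : (n+1) % 2 = 1 ∧ (n+2) % 2 = 0 ∨ (n+1) % 2 = 0 ∧ (n+2) % 2 = 1 := by omega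
  rcases hpar with ⟨h1, h2⟩ | ⟨h1, h2⟩ <;> rw [h1, h2] <;> decide

theorem side_alt (n : ℕ) : snakeSide altWord (n+2) = 2*n+3 := by
  unfold snakeSide
  rw [if_pos (Or.inr ⟨by omega, by
    have e : n+2-1 = n+1 := by omega
    rw [e]; exact alt_ne n⟩)]
  omega

theorem side_lad (n : ℕ) : snakeSide (fun _ => Letter.L) ((n+1)+1) = 2*(n+1)+2 := by
  unfold snakeSide
  rw [if_neg]
  · omega
  · rintro (⟨h1, _⟩ | ⟨_, h2⟩)
    · omega
    · exact h2 rfl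

theorem step_mono {n : ℕ} {w w' : ℕ → Letter}
    (h : ∀ m, Hs n w m ≤ Hs n w' m) : ∀ k, Gc (n+1) w k ≤ Gc (n+1) w' k := by
  have aux : ∀ j k, 2*(n+1)+4 ≤ k + j → Gc (n+1) w k ≤ Gc (n+1) w' k := by
    intro j
    induction j with
    | zero => intro k hk; rw [Gc_zero _ _ (by omega), Gc_zero _ _ (by omega)]
    | succ j ih =>
        intro k hk
        rcases le_or_gt (2*(n+1)+4) k with hk2 | hk2
        · rw [Gc_zero _ _ hk2, Gc_zero _ _ hk2]
        · rw [Gc_rec (n+1) w k, Gc_rec (n+1) w' k]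
          have h1 : Dc (n+1) w k ≤ Dc (n+1) w' k := by
            cases k with
            | zero => rw [Dc_zero, Dc_zero]
            | succ m => rw [Dc_succ, Dc_succ]; exact h m
          exact Nat.add_le_add h1 (ih (k+1) (by omega))
  exact fun k => aux (2*(n+1)+4) k (by omega)

theorem main : ∀ n : ℕ,
    (∀ w k, Gc (n+1) altWord k ≤ Gc (n+1) w k ∧
      Gc (n+1) w k ≤ Gc (n+1) (fun _ => Letter.L) k) ∧
    (∀ w, eC n altWord ≤ eC n w ∧ eC n w ≤ eC n (fun _ => Letter.L)) := by
  intro n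
  induction n with
  | zero =>
    constructor
    · intro w k
      constructor
      · exact step_mono (fun m => by rw [Hs0_eval, Hs0_eval]) k
      · exact step_mono (fun m => by rw [Hs0_eval, Hs0_eval]) k
    · intro w
      refine ⟨?_, ?_⟩ <;> rw [eC0, eC0]
  | succ n ih =>
    obtain ⟨ihG, ihE⟩ := ih
    have hE : ∀ w, eC (n+1) altWord ≤ eC (n+1) w ∧
        eC (n+1) w ≤ eC (n+1) (fun _ => Letter.L) := by
      intro w
      have h1 := (ihG w 0).1
      have h2 := (ihG w 0).2
      rw [Gc_card, Gc_card] at h1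
      rw [Gc_card, Gc_card] at h2
      exact ⟨h1, h2⟩
    refine ⟨?_, hE⟩
    intro w k
    have hDc1 : ∀ u : ℕ → Letter, Dc (n+1) u 1 = eC n u := by
      intro u; rw [show (1:ℕ) = 0+1 from rfl, Dc_succ, Hs_zero]
    have hDc2 : ∀ u : ℕ → Letter, Dc (n+1) u 2 = eC n u := by
      intro u; rw [show (2:ℕ) = 1+1 from rfl, Dc_succ, Hs_one]
    have hGc2 : ∀ u : ℕ → Letter, eC n u ≤ Gc (n+1) u 2 := by
      intro u
      have hr := Gc_rec (n+1) u 2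
      have := hDc2 u
      omega
    have hladS : ∀ m, Hs (n+1) (fun _ => Letter.L) m =
        Gc (n+1) (fun _ => Letter.L) m :=
      fun m => Hs_straight (n+1) _ m (side_lad n)
    have hwc : snakeSide w ((n+1)+1) = 2*n+3 ∨ snakeSide w ((n+1)+1) = 2*(n+1)+2 := by
      have := snakeSide_choice w ((n+1)+1) (by omega)
      omega
    have haltT : snakeSide altWord (n+2) = 2*n+3 := side_alt n
    have hupper : ∀ m, Hs (n+1) w m ≤ Hs (n+1) (fun _ => Letter.L) m := by
      rcases hwc with hw | hw
      · intro m
        match m with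
        | 0 => rw [Hs_zero, Hs_zero]; exact (hE w).2
        | 1 => rw [Hs_one, Hs_one]; exact (hE w).2
        | 2 =>
            rw [Hs_turn2 n w hw, hDc1 w, hladS 2]
            exact le_trans (ihE w).2 (hGc2 _)
        | (m+3) => rw [Hs_turn3 n w (by omega) hw]; exact Nat.zero_le _
      · intro m
        rw [Hs_straight (n+1) w m hw, hladS m]
        exact (ihG w m).2
    have hlower : ∀ m, Hs (n+1) altWord m ≤ Hs (n+1) w m := by
      intro m
      match m with
      | 0 => rw [Hs_zero, Hs_zero]; exact (hE w).1
      | 1 => rw [Hs_one, Hs_one]; exact (hE w).1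
      | 2 =>
          rw [Hs_turn2 n altWord haltT, hDc1 altWord]
          rcases hwc with hw | hw
          · rw [Hs_turn2 n w hw, hDc1 w]; exact (ihE w).1
          · rw [Hs_straight (n+1) w 2 hw]
            exact le_trans (ihE w).1 (hGc2 w)
      | (m+3) => rw [Hs_turn3 n altWord (by omega) haltT]; exact Nat.zero_le _
    exact ⟨step_mono hlower k, step_mono hupper k⟩

end SnakeDev

theorem stmt7 (n : ℕ) (w : ℕ → Letter) :
    linExtCount n altWord ≤ linExtCount n w ∧
      linExtCount n w ≤ linExtCount n (fun _ => Letter.L) := by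
  cases n with
  | zero =>
    have h1 : linExtCount 0 altWord = 2 := SnakeDev.eC0 altWord
    have h2 : linExtCount 0 w = 2 := SnakeDev.eC0 w
    have h3 : linExtCount 0 (fun _ => Letter.L) = 2 := SnakeDev.eC0 _
    omega
  | succ n =>
    obtain ⟨hG, _⟩ := SnakeDev.main n
    have h1 := (hG w 0).1
    have h2 := (hG w 0).2
    rw [SnakeDev.Gc_card, SnakeDev.Gc_card] at h1
    rw [SnakeDev.Gc_card, SnakeDev.Gc_card] at h2
    exact ⟨h1, h2⟩
end

section
/- Let w ∈ 𝒱 be a generalized snake word of length n. Then the poset Q_w of meet-irreducible elements of P̂(w) has exactly n + 4 elements. -/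
section Aux

variable {n : ℕ} {w : ℕ → Letter}

theorem hat_ext {x y : SnakeHat n w} (h : x.1 = y.1) : x = y := Fin.ext h

theorem cov_src_two' {a c : ℕ} (h : SnakeCov n w a c) (ha : a = 2) : c = 0 := by
  cases h <;> omega

theorem cov_src_even' {m a c : ℕ} (hm : 1 ≤ m) (h : SnakeCov n w a c) (ha : a = 2*m+2) :
    c = snakeSide w m := by
  cases h with
  | covSide m' h1 h2 =>
      have : m' = m := by omega
      subst this; rfl
  | _ => omega

theorem covInto_odd' {k a c : ℕ} (h : SnakeCov n w c a) (ha : a = 2*k+1) :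
    c = 2*k+3 ∨ (c = 2*k+4 ∧ snakeSide w (k+1) = 2*k+1) := by
  cases h with
  | cov31 => left; omega
  | covOdd m h1 h2 => left; omega
  | covSide m h1 h2 =>
      right
      unfold snakeSide at ha
      split at ha
      · rename_i hcond
        have hm : m = k + 1 := by omega
        subst hm
        refine ⟨by omega, ?_⟩
        unfold snakeSide
        rw [if_pos hcond]
        omega
      · omega
  | _ => omega

theorem covInto_even' {k a c : ℕ} (h : SnakeCov n w c a) (ha : a = 2*k+2) :
    c = 2*k+3 ∨ (c = 2*k+4 ∧ snakeSide w (k+1) = 2*k+2) := by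
  cases h with
  | cov32 => left; omega
  | covBot m h1 h2 => left; omega
  | covSide m h1 h2 =>
      right
      unfold snakeSide at ha
      split at ha
      · omega
      · rename_i hcond
        have hm : m = k + 1 := by omega
        subst hm
        refine ⟨by omega, ?_⟩
        unfold snakeSide
        rw [if_neg hcond]
        omega
  | _ => omega

/-- key lemma: 2k+3 is the meet of 2k+1 and 2k+2 -/
theorem meet_key {k u : ℕ} (h1 : SnakeLE n w u (2*k+1)) (h2 : SnakeLE n w u (2*k+2)) :
    SnakeLE n w u (2*k+3) := by
  rcases Relation.ReflTransGen.cases_tail h1 with heq | ⟨c, hc, hcov⟩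
  · exfalso
    have := snakeLE_le h2
    omega
  · rcases covInto_odd' hcov rfl with rfl | ⟨rfl, hside⟩
    · exact hc
    · rcases Relation.ReflTransGen.cases_tail h2 with heq2 | ⟨c', hc', hcov'⟩
      · exfalso
        have := snakeLE_le hc
        omega
      · rcases covInto_even' hcov' rfl with rfl | ⟨rfl, hside'⟩
        · exact hc'
        · exfalso; omega

/-- every element of P(w) is above the minimal element 2n+3 -/
theorem reach_aux : ∀ j u, 2*n+3 - j ≤ u → u ≤ 2*n+3 → SnakeLE n w (2*n+3) u := by
  intro j
  induction j with
  | zero =>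
      intro u h1 h2
      have : u = 2*n+3 := by omega
      subst this
      exact Relation.ReflTransGen.refl
  | succ j ih =>
      intro u h1 h2
      by_cases hcase : 2*n+3 - j ≤ u
      · exact ih u hcase h2
      · have hu : u + 1 = 2*n+3 - j := by omega
        have hult : u < 2*n+3 := by omega
        rcases Nat.lt_or_ge u 3 with h3 | h3
        · interval_cases u
          · exact (ih 1 (by omega) (by omega)).tail SnakeCov.cov10
          · exact (ih 3 (by omega) (by omega)).tail SnakeCov.cov31
          · exact (ih 3 (by omega) (by omega)).tail SnakeCov.cov32
        · rcases Nat.even_or_odd u with ⟨r, hr⟩ | ⟨r, hr⟩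
          · have hcov : SnakeCov n w (2*(r-1)+3) (2*(r-1)+2) :=
              SnakeCov.covBot (r-1) (by omega) (by omega)
            have e1 : 2*(r-1)+2 = u := by omega
            have e2 : 2*(r-1)+3 = u+1 := by omega
            rw [e1, e2] at hcov
            exact (ih (u+1) (by omega) (by omega)).tail hcov
          · have hcov : SnakeCov n w (2*r+3) (2*r+1) :=
              SnakeCov.covOdd r (by omega) (by omega)
            have e1 : 2*r+1 = u := by omega
            rw [e1] at hcov
            exact (ih (2*r+3) (by omega) (by omega)).tail hcov

theorem reach_bot {u : ℕ} (hu : u ≤ 2*n+3) : SnakeLE n w (2*n+3) u :=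
  reach_aux (2*n+3) u (by omega) hu

/-- an element with a minimum strict-upper-set is meet irreducible -/
theorem mi_of_min_succ (x s : SnakeHat n w) (hxs : x < s)
    (hmin : ∀ y, x < y → s ≤ y) : MeetIrred x := by
  constructor
  · intro htop
    exact absurd (htop s) hxs.not_ge
  · intro y z hglb
    by_contra hc
    push_neg at hc
    have hxy : x < y := lt_of_le_of_ne (hglb.1 (Set.mem_insert y {z})) hc.1
    have hxz : x < z :=
      lt_of_le_of_ne (hglb.1 (Set.mem_insert_of_mem y (Set.mem_singleton z))) hc.2
    have hs : s ∈ lowerBounds ({y, z} : Set (SnakeHat n w)) := by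
      intro b hb
      rcases hb with rfl | hb
      · exact hmin b hxy
      · rw [Set.mem_singleton_iff] at hb
        subst hb
        exact hmin b hxz
    exact absurd (hglb.2 hs) hxs.not_ge

/-- characterization of meet-irreducible elements of P̂(w) -/
theorem mi_iff (x : SnakeHat n w) :
    MeetIrred x ↔ (x.1 = 2*n+5 ∨ x.1 ≤ 2 ∨ (x.1 % 2 = 0 ∧ 4 ≤ x.1 ∧ x.1 ≤ 2*n+2)) := by
  constructor
  · intro hmi
    by_contra hP
    push_neg at hP
    have hx6 := x.2
    have hcase : x.1 = 2*n+4 ∨ ∃ k, k ≤ n ∧ x.1 = 2*k+3 := by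
      rcases hP with ⟨h1, h2, h3⟩
      by_cases he : x.1 % 2 = 0
      · left; omega
      · right
        refine ⟨(x.1 - 3)/2, by omega, by omega⟩
    rcases hcase with htop | ⟨k, hk, hxk⟩
    · exact hmi.1 (fun y => Or.inr (Or.inl htop))
    · have hy6 : 2*k+1 < 2*n+6 := by omega
      have hz6 : 2*k+2 < 2*n+6 := by omega
      have hcovy : SnakeCov n w (2*k+3) (2*k+1) := by
        rcases Nat.eq_zero_or_pos k with rfl | hk1
        · exact SnakeCov.cov31
        · exact SnakeCov.covOdd k hk1 hk
      have hcovz : SnakeCov n w (2*k+3) (2*k+2) := by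
        rcases Nat.eq_zero_or_pos k with rfl | hk1
        · exact SnakeCov.cov32
        · exact SnakeCov.covBot k hk1 hk
      have hglb : IsGLB ({⟨2*k+1, hy6⟩, ⟨2*k+2, hz6⟩} : Set (SnakeHat n w)) x := by
        constructor
        · intro b hb
          rcases hb with rfl | hb
          · refine Or.inr (Or.inr ⟨by omega, by show 2*k+1 < 2*n+4; omega, ?_⟩)
            show SnakeLE n w x.1 (2*k+1)
            rw [hxk]; exact Relation.ReflTransGen.single hcovy
          · replace hb := Set.mem_singleton_iff.mp hb
            subst hb
            refine Or.inr (Or.inr ⟨by omega, by show 2*k+2 < 2*n+4; omega, ?_⟩)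
            show SnakeLE n w x.1 (2*k+2)
            rw [hxk]; exact Relation.ReflTransGen.single hcovz
        · intro u hu
          have huy : u ≤ (⟨2*k+1, hy6⟩ : SnakeHat n w) := hu (Set.mem_insert _ _)
          have huz : u ≤ (⟨2*k+2, hz6⟩ : SnakeHat n w) :=
            hu (Set.mem_insert_of_mem _ (Set.mem_singleton _))
          rcases huy with hb | hy4 | ⟨hu4, _, hley⟩
          · exact Or.inl hb
          · exfalso
            have : (2*k+1 : ℕ) = 2*n+4 := hy4
            omega
          · rcases huz with hb | hz4 | ⟨_, _, hlez⟩
            · exact Or.inl hb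
            · exfalso
              have : (2*k+2 : ℕ) = 2*n+4 := hz4
              omega
            · refine Or.inr (Or.inr ⟨hu4, by omega, ?_⟩)
              rw [hxk]
              exact meet_key hley hlez
      rcases hmi.2 _ _ hglb with he | he
      · have := congrArg Fin.val he
        simp only [hxk] at this
        omega
      · have := congrArg Fin.val he
        simp only [hxk] at this
        omega
  · intro hP
    have hx6 := x.2
    rcases hP with hbot | hsmall | ⟨hev, h4, h2n⟩
    · -- bottom element: unique atom 2n+3
      refine mi_of_min_succ x ⟨2*n+3, by omega⟩ ?_ ?_
      · refine lt_of_le_of_ne (Or.inl hbot) (fun he => ?_)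
        have := congrArg Fin.val he
        simp only [hbot] at this
        omega
      · intro y hy
        have hne : y.1 ≠ 2*n+5 := by
          intro he
          exact absurd (hat_ext (he.trans hbot.symm) : y = x) (ne_of_gt hy)
        by_cases hy4' : y.1 = 2*n+4
        · exact Or.inr (Or.inl hy4')
        · have hy4 : y.1 < 2*n+4 := by have := y.2; omega
          exact Or.inr (Or.inr ⟨by show 2*n+3 < 2*n+4; omega, hy4,
            reach_bot (by omega)⟩)
    · interval_cases hx : x.1
      · -- x = 0 : unique successor is the top
        refine mi_of_min_succ x ⟨2*n+4, by omega⟩ ?_ ?_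
        · refine lt_of_le_of_ne (Or.inr (Or.inl rfl)) (fun he => ?_)
          have := congrArg Fin.val he
          simp only [hx] at this
          omega
        · intro y hy
          have hle : x ≤ y := le_of_lt hy
          rcases hle with hb | hy4 | ⟨_, _, hl⟩
          · exfalso; omega
          · exact Or.inr (Or.inl hy4)
          · exfalso
            rw [hx] at hl
            have := snakeLE_le hl
            have hy0 : y.1 = 0 := by omega
            exact absurd (hat_ext (hy0.trans hx.symm) : y = x) (ne_of_gt hy)
      · -- x = 1
        refine mi_of_min_succ x ⟨0, by omega⟩ ?_ ?_
        · refine lt_of_le_of_ne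
            (Or.inr (Or.inr ⟨by omega, by show (0:ℕ) < 2*n+4; omega, ?_⟩))
            (fun he => ?_)
          · show SnakeLE n w x.1 0
            rw [hx]; exact Relation.ReflTransGen.single SnakeCov.cov10
          · have := congrArg Fin.val he
            simp only [hx] at this
            omega
        · intro y hy
          have hle : x ≤ y := le_of_lt hy
          rcases hle with hb | hy4 | ⟨_, hy4, hl⟩
          · exfalso; omega
          · exact Or.inr (Or.inl hy4)
          · rw [hx] at hl
            have hle1 := snakeLE_le hl
            have hne : y.1 ≠ 1 := by
              intro he
              exact absurd (hat_ext (he.trans hx.symm) : y = x) (ne_of_gt hy)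
            have hy0 : y.1 = 0 := by omega
            exact le_of_eq (hat_ext hy0.symm)
      · -- x = 2
        refine mi_of_min_succ x ⟨0, by omega⟩ ?_ ?_
        · refine lt_of_le_of_ne
            (Or.inr (Or.inr ⟨by omega, by show (0:ℕ) < 2*n+4; omega, ?_⟩))
            (fun he => ?_)
          · show SnakeLE n w x.1 0
            rw [hx]; exact Relation.ReflTransGen.single SnakeCov.cov20
          · have := congrArg Fin.val he
            simp only [hx] at this
            omega
        · intro y hy
          have hle : x ≤ y := le_of_lt hy
          rcases hle with hb | hy4 | ⟨_, hy4, hl⟩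
          · exfalso; omega
          · exact Or.inr (Or.inl hy4)
          · rw [hx] at hl
            have hne : y.1 ≠ 2 := by
              intro he
              exact absurd (hat_ext (he.trans hx.symm) : y = x) (ne_of_gt hy)
            rcases Relation.ReflTransGen.cases_head hl with heq | ⟨c, hcov, hrest⟩
            · exact absurd heq.symm hne
            · have hc0 := cov_src_two' hcov rfl
              subst hc0
              have := snakeLE_le hrest
              have hy0 : y.1 = 0 := by omega
              exact le_of_eq (hat_ext hy0.symm)
    · -- x = 2m+2, 1 ≤ m ≤ n
      obtain ⟨m, hm1, hmn, hxm⟩ : ∃ m, 1 ≤ m ∧ m ≤ n ∧ x.1 = 2*m+2 :=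
        ⟨(x.1 - 2)/2, by omega, by omega, by omega⟩
      have hside_lt : snakeSide w m ≤ 2*m := by
        unfold snakeSide; split <;> omega
      refine mi_of_min_succ x ⟨snakeSide w m, by omega⟩ ?_ ?_
      · refine lt_of_le_of_ne
          (Or.inr (Or.inr ⟨by omega, by show snakeSide w m < 2*n+4; omega, ?_⟩))
          (fun he => ?_)
        · show SnakeLE n w x.1 (snakeSide w m)
          rw [hxm]; exact Relation.ReflTransGen.single (SnakeCov.covSide m hm1 hmn)
        · have := congrArg Fin.val he
          simp only [hxm] at this
          omega
      · intro y hy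
        have hle : x ≤ y := le_of_lt hy
        rcases hle with hb | hy4 | ⟨_, hy4, hl⟩
        · exfalso; omega
        · exact Or.inr (Or.inl hy4)
        · rw [hxm] at hl
          have hne : y.1 ≠ 2*m+2 := by
            intro he
            exact absurd (hat_ext (he.trans hxm.symm) : y = x) (ne_of_gt hy)
          rcases Relation.ReflTransGen.cases_head hl with heq | ⟨c, hcov, hrest⟩
          · exact absurd heq.symm hne
          · have hc := cov_src_even' hm1 hcov rfl
            subst hc
            exact Or.inr (Or.inr ⟨by show snakeSide w m < 2*n+4; omega, hy4, hrest⟩)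

/-- counting: explicit bijection with Fin (n+4) -/
noncomputable def miEquiv (n : ℕ) (w : ℕ → Letter) : SnakeQ n w ≃ Fin (n+4) where
  toFun x := ⟨if x.1.1 ≤ 2 then x.1.1 else if x.1.1 = 2*n+5 then 3 else x.1.1/2 + 2, by
    have h := (mi_iff x.1).mp x.2
    split_ifs <;> omega⟩
  invFun i := ⟨⟨if i.1 ≤ 2 then i.1 else if i.1 = 3 then 2*n+5 else 2*i.1 - 4, by
      have := i.2
      split_ifs <;> omega⟩, by
    refine (mi_iff _).mpr ?_
    show (if i.1 ≤ 2 then i.1 else if i.1 = 3 then 2*n+5 else 2*i.1 - 4) = 2*n+5 ∨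
      (if i.1 ≤ 2 then i.1 else if i.1 = 3 then 2*n+5 else 2*i.1 - 4) ≤ 2 ∨
      ((if i.1 ≤ 2 then i.1 else if i.1 = 3 then 2*n+5 else 2*i.1 - 4) % 2 = 0 ∧
        4 ≤ (if i.1 ≤ 2 then i.1 else if i.1 = 3 then 2*n+5 else 2*i.1 - 4) ∧
        (if i.1 ≤ 2 then i.1 else if i.1 = 3 then 2*n+5 else 2*i.1 - 4) ≤ 2*n+2)
    have := i.2
    split_ifs with h1 h2
    · right; left; omega
    · left; rfl
    · right; right; omega⟩
  left_inv x := by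
    have h := (mi_iff x.1).mp x.2
    have hx6 := x.1.2
    apply Subtype.ext
    apply hat_ext
    show (if (if x.1.1 ≤ 2 then x.1.1 else if x.1.1 = 2*n+5 then 3 else x.1.1/2 + 2) ≤ 2
          then (if x.1.1 ≤ 2 then x.1.1 else if x.1.1 = 2*n+5 then 3 else x.1.1/2 + 2)
          else if (if x.1.1 ≤ 2 then x.1.1 else if x.1.1 = 2*n+5 then 3 else x.1.1/2 + 2) = 3
          then 2*n+5
          else 2*(if x.1.1 ≤ 2 then x.1.1 else if x.1.1 = 2*n+5 then 3 else x.1.1/2 + 2) - 4)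
        = x.1.1
    split_ifs <;> omega
  right_inv i := by
    have hi := i.2
    apply Fin.ext
    show (if (if i.1 ≤ 2 then i.1 else if i.1 = 3 then 2*n+5 else 2*i.1 - 4) ≤ 2
          then (if i.1 ≤ 2 then i.1 else if i.1 = 3 then 2*n+5 else 2*i.1 - 4)
          else if (if i.1 ≤ 2 then i.1 else if i.1 = 3 then 2*n+5 else 2*i.1 - 4) = 2*n+5
          then 3
          else (if i.1 ≤ 2 then i.1 else if i.1 = 3 then 2*n+5 else 2*i.1 - 4)/2 + 2)
        = i.1
    split_ifs <;> omega

end Aux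

theorem stmt8 (n : ℕ) (w : ℕ → Letter) (hw : InV n w) :
    Nat.card (SnakeQ n w) = n + 4 := by
  rw [Nat.card_congr (miEquiv n w), Nat.card_eq_fintype_card, Fintype.card_fin]
end

section
/- Let w ∈ 𝒱 be a generalized snake word of length n. Then no circuit of the vertex set V(Q_w) of the order polytope O(Q_w) contains the zero vector v_∅ (the indicator vector of the empty filter) or the all-ones vector v_{Q_w} (the indicator vector of the filter consisting of all of Q_w). -/
/-- Key lemma: a set whose elements take a common value at coordinate `c` except for one
point `v`, and which is affinely independent after removing `v`, is affinely independent. -/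
lemma circuit_key {ι : Type*} (Z : Set (ι → ℝ)) (v : ι → ℝ) (c : ι) (x y : ℝ) (hxy : x ≠ y)
    (hv : v c = x) (hu : ∀ u ∈ Z, u ≠ v → u c = y)
    (hY : AffineIndependent ℝ (Subtype.val : ↥(Z \ {v}) → (ι → ℝ))) :
    AffineIndependent ℝ (Subtype.val : ↥Z → (ι → ℝ)) := by
  classical
  rw [affineIndependent_iff]
  intro s wt hsum hcombo
  set P : ↥Z → Prop := fun e => (e : ι → ℝ) = v with hP
  have hval : ∀ e : ↥Z, (e : ι → ℝ) c = if P e then x else y := by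
    intro e
    by_cases h : P e
    · rw [if_pos h, h, hv]
    · rw [if_neg h]; exact hu e e.2 h
  have hc0 : ∑ e ∈ s, wt e * (if P e then x else y) = 0 := by
    have h := congrFun hcombo c
    have h2 : ∑ e ∈ s, wt e * ((e : ι → ℝ) c) = 0 := by
      simpa [Finset.sum_apply] using h
    rw [← h2]
    exact Finset.sum_congr rfl fun e _ => by rw [hval]
  have hsplit1 := Finset.sum_filter_add_sum_filter_not s P wt
  have hsplit2 := Finset.sum_filter_add_sum_filter_not s P
      (fun e => wt e * (if P e then x else y))
  have h1 : ∑ e ∈ s.filter P, wt e * (if P e then x else y)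
      = (∑ e ∈ s.filter P, wt e) * x := by
    rw [Finset.sum_mul]
    exact Finset.sum_congr rfl fun e he => by
      rw [if_pos (Finset.mem_filter.mp he).2]
  have h2 : ∑ e ∈ s.filter (fun e => ¬ P e), wt e * (if P e then x else y)
      = (∑ e ∈ s.filter (fun e => ¬ P e), wt e) * y := by
    rw [Finset.sum_mul]
    exact Finset.sum_congr rfl fun e he => by
      rw [if_neg (Finset.mem_filter.mp he).2]
  set a := ∑ e ∈ s.filter P, wt e with ha
  set b := ∑ e ∈ s.filter (fun e => ¬ P e), wt e with hb
  have hab : a + b = 0 := by rw [ha, hb, hsplit1, hsum]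
  have haxy : a * x + b * y = 0 := by
    rw [← h1, ← h2, hsplit2] at *
    exact hc0
  have ha0 : a = 0 := by
    have hb' : b = -a := by linarith
    rw [hb'] at haxy
    have h3 : a * (x - y) = 0 := by ring_nf; ring_nf at haxy; linarith
    rcases mul_eq_zero.mp h3 with h | h
    · exact h
    · exact absurd (sub_eq_zero.mp h) hxy
  -- any index with P e has zero weight
  have hstar : ∀ e ∈ s, P e → wt e = 0 := by
    intro e he hPe
    have hfe : s.filter P = {e} := by
      ext e'
      simp only [Finset.mem_filter, Finset.mem_singleton]
      constructor
      · rintro ⟨he', hP'⟩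
        exact Subtype.coe_injective (hP'.trans hPe.symm)
      · rintro rfl; exact ⟨he, hPe⟩
    have := ha0
    rw [ha, hfe, Finset.sum_singleton] at this
    exact this
  intro e he
  by_cases hPe : P e
  · exact hstar e he hPe
  · -- transfer to Y
    set Y := Z \ {v} with hYdef
    have heY : (e : ι → ℝ) ∈ Y := ⟨e.2, hPe⟩
    set f : ↥Z → ↥Y := fun i => if h : P i then ⟨e, heY⟩ else ⟨(i : ι → ℝ), ⟨i.2, h⟩⟩ with hf
    have hfval : ∀ i : ↥Z, ¬ P i → ((f i : ι → ℝ)) = (i : ι → ℝ) := by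
      intro i hi; rw [hf]; simp [dif_neg hi]
    set wt' : ↥Y → ℝ := fun j => wt ⟨(j : ι → ℝ), j.2.1⟩ with hwt'
    have hwtf : ∀ i : ↥Z, ¬ P i → wt' (f i) = wt i := by
      intro i hi; rw [hwt', hf]; simp [dif_neg hi]
    have finj : ∀ i ∈ s.filter (fun i => ¬ P i), ∀ j ∈ s.filter (fun i => ¬ P i),
        f i = f j → i = j := by
      intro i hi j hj hij
      have h1 := hfval i (Finset.mem_filter.mp hi).2
      have h2 := hfval j (Finset.mem_filter.mp hj).2
      exact Subtype.coe_injective (show (i : ι → ℝ) = j by rw [← h1, ← h2, hij])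
    set s' : Finset ↥Y := (s.filter (fun i => ¬ P i)).image f with hs'
    have hsum' : ∑ j ∈ s', wt' j = 0 := by
      rw [hs', Finset.sum_image finj]
      have : ∑ i ∈ s.filter (fun i => ¬ P i), wt' (f i)
          = ∑ i ∈ s.filter (fun i => ¬ P i), wt i :=
        Finset.sum_congr rfl fun i hi => hwtf i (Finset.mem_filter.mp hi).2
      rw [this, ← hb]
      linarith [hab, ha0]
    have hcombo' : ∑ j ∈ s', wt' j • (j : ι → ℝ) = 0 := by
      rw [hs', Finset.sum_image finj]
      have heq : ∑ i ∈ s.filter (fun i => ¬ P i), wt' (f i) • ((f i : ↥Y) : ι → ℝ)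
          = ∑ i ∈ s.filter (fun i => ¬ P i), wt i • (i : ι → ℝ) :=
        Finset.sum_congr rfl fun i hi => by
          rw [hwtf i (Finset.mem_filter.mp hi).2, hfval i (Finset.mem_filter.mp hi).2]
      rw [heq]
      have hz : ∑ i ∈ s.filter P, wt i • (i : ι → ℝ) = 0 :=
        Finset.sum_eq_zero fun i hi => by
          rw [hstar i (Finset.mem_filter.mp hi).1 (Finset.mem_filter.mp hi).2, zero_smul]
      have := Finset.sum_filter_add_sum_filter_not s P (fun i => wt i • (i : ι → ℝ))
      rw [hz] at this
      simp only [zero_add] at this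
      rw [this, hcombo]
    have hall := affineIndependent_iff.mp hY s' wt' hsum' hcombo'
    have hfe : f e ∈ s' := Finset.mem_image_of_mem f (Finset.mem_filter.mpr ⟨he, hPe⟩)
    have := hall (f e) hfe
    rw [hwtf e hPe] at this
    exact this


/-- Every element of `P(w)` is below `0`. -/
theorem snakeLE_to_zero (n : ℕ) (w : ℕ → Letter) :
    ∀ y, y < 2 * n + 4 → SnakeLE n w y 0 := by
  intro y
  induction y using Nat.strong_induction_on with
  | _ y ih =>
    intro hy
    rcases Nat.lt_or_ge y 4 with h4 | h4
    · interval_cases y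
      · exact Relation.ReflTransGen.refl
      · exact Relation.ReflTransGen.single SnakeCov.cov10
      · exact Relation.ReflTransGen.single SnakeCov.cov20
      · exact Relation.ReflTransGen.head SnakeCov.cov31
          (Relation.ReflTransGen.single SnakeCov.cov10)
    · rcases Nat.even_or_odd y with ⟨m, hm⟩ | ⟨m, hm⟩
      · have hk : y = 2 * (m - 1) + 2 := by omega
        have hc : SnakeCov n w y (snakeSide w (m - 1)) := by
          rw [hk]; exact SnakeCov.covSide _ (by omega) (by omega)
        have hlt := snakeCov_lt hc
        exact Relation.ReflTransGen.head hc (ih _ hlt (by omega))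
      · have hk : y = 2 * (m - 1) + 3 := by omega
        have hc : SnakeCov n w y (2 * (m - 1) + 1) := by
          rw [hk]; exact SnakeCov.covOdd _ (by omega) (by omega)
        exact Relation.ReflTransGen.head hc (ih _ (by omega) (by omega))

/-- `2n+3` is below every element of `P(w)`. -/
theorem snakeLE_from_bot_aux (n : ℕ) (w : ℕ → Letter) :
    ∀ d y, 2 * n + 3 ≤ y + d → y < 2 * n + 4 → SnakeLE n w (2 * n + 3) y := by
  intro d
  induction d with
  | zero =>
    intro y h1 h2
    have hy : y = 2 * n + 3 := by omega
    rw [hy]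
    exact Relation.ReflTransGen.refl
  | succ d ih =>
    intro y h1 h2
    by_cases he : y = 2 * n + 3
    · rw [he]
      exact Relation.ReflTransGen.refl
    · have hy : y < 2 * n + 3 := by omega
      rcases Nat.lt_or_ge y 3 with h3 | h3
      · interval_cases y
        · exact Relation.ReflTransGen.tail (ih 1 (by omega) (by omega)) SnakeCov.cov10
        · exact Relation.ReflTransGen.tail (ih 3 (by omega) (by omega)) SnakeCov.cov31
        · exact Relation.ReflTransGen.tail (ih 3 (by omega) (by omega)) SnakeCov.cov32
      · rcases Nat.even_or_odd y with ⟨m, hm⟩ | ⟨m, hm⟩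
        · have hk : y = 2 * (m - 1) + 2 := by omega
          have hc : SnakeCov n w (2 * (m - 1) + 3) y := by
            rw [hk]; exact SnakeCov.covBot _ (by omega) (by omega)
          exact Relation.ReflTransGen.tail (ih (2 * (m - 1) + 3) (by omega) (by omega)) hc
        · have hk : y = 2 * (m - 1) + 3 := by omega
          have hc : SnakeCov n w (2 * (m - 1) + 1 + 2 * 1 + 2) y := by
            have : 2 * (m - 1) + 1 + 2 * 1 + 2 = 2 * m + 3 := by omega
            rw [this, hk]
            have h5 : 2 * (m - 1) + 3 = 2 * (m - 1) + 3 := rfl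
            have : (2 * m + 3) = 2 * m + 3 := rfl
            exact (by
              have hmn : m ≤ n := by omega
              have : SnakeCov n w (2 * m + 3) (2 * m + 1) := SnakeCov.covOdd m (by omega) hmn
              have heq : 2 * (m - 1) + 3 = 2 * m + 1 := by omega
              rw [heq]
              exact this)
          have h25 : 2 * (m - 1) + 1 + 2 * 1 + 2 = 2 * m + 3 := by omega
          rw [h25] at hc
          exact Relation.ReflTransGen.tail (ih (2 * m + 3) (by omega) (by omega)) hc

theorem snakeLE_from_bot (n : ℕ) (w : ℕ → Letter) (y : ℕ) (hy : y < 2 * n + 4) :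
    SnakeLE n w (2 * n + 3) y :=
  snakeLE_from_bot_aux n w (2 * n + 3) y (by omega) hy

/-- The element `0` of `P̂(w)`. -/
def snakeTopP (n : ℕ) (w : ℕ → Letter) : SnakeHat n w := ⟨0, by omega⟩

/-- The element `0̂ = 2n+5` of `P̂(w)`. -/
def snakeBotP (n : ℕ) (w : ℕ → Letter) : SnakeHat n w := ⟨2 * n + 5, by omega⟩

theorem snakeTopP_meetIrred (n : ℕ) (w : ℕ → Letter) : MeetIrred (snakeTopP n w) := by
  constructor
  · intro hT
    have h := hT (⟨2 * n + 4, by omega⟩ : SnakeHat n w)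
    have h' : SnakeHatLE n w (2 * n + 4) 0 := h
    rcases h' with h | h | ⟨h, _, _⟩ <;> omega
  · intro yy zz hglb
    have hyL : (snakeTopP n w) ≤ yy := hglb.1 (Set.mem_insert _ _)
    have hzL : (snakeTopP n w) ≤ zz := hglb.1 (Set.mem_insert_of_mem _ rfl)
    have hy' : SnakeHatLE n w 0 yy.1 := hyL
    have hz' : SnakeHatLE n w 0 zz.1 := hzL
    have hcase : ∀ b : SnakeHat n w, SnakeHatLE n w 0 b.1 → b.1 = 0 ∨ b.1 = 2 * n + 4 := by
      intro b hb
      rcases hb with h | h | ⟨_, _, hle⟩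
      · omega
      · exact Or.inr h
      · exact Or.inl (by have := snakeLE_le hle; omega)
    rcases hcase yy hy' with h | h
    · exact Or.inl (Fin.ext h.symm)
    · rcases hcase zz hz' with h2 | h2
      · exact Or.inr (Fin.ext h2.symm)
      · exfalso
        have htopLB : (⟨2 * n + 4, by omega⟩ : SnakeHat n w) ∈ lowerBounds {yy, zz} := by
          intro b hb
          rcases hb with rfl | hb
          · exact Or.inr (Or.inl h)
          · rcases hb with rfl
            exact Or.inr (Or.inl h2)
        have := hglb.2 htopLB
        have h' : SnakeHatLE n w (2 * n + 4) 0 := this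
        rcases h' with h | h | ⟨h, _, _⟩ <;> omega

theorem snakeBotP_meetIrred (n : ℕ) (w : ℕ → Letter) : MeetIrred (snakeBotP n w) := by
  constructor
  · intro hT
    have h := hT (⟨2 * n + 4, by omega⟩ : SnakeHat n w)
    have h' : SnakeHatLE n w (2 * n + 4) (2 * n + 5) := h
    rcases h' with h | h | ⟨_, h, _⟩ <;> omega
  · intro yy zz hglb
    by_cases hy : yy.1 = 2 * n + 5
    · exact Or.inl (Fin.ext hy.symm)
    by_cases hz : zz.1 = 2 * n + 5
    · exact Or.inr (Fin.ext hz.symm)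
    exfalso
    have hcLB : (⟨2 * n + 3, by omega⟩ : SnakeHat n w) ∈ lowerBounds {yy, zz} := by
      intro b hb
      show SnakeHatLE n w (2 * n + 3) b.1
      have hbne : b.1 ≠ 2 * n + 5 := by
        rcases hb with rfl | hb
        · exact hy
        · rcases hb with rfl; exact hz
      by_cases hb4 : b.1 = 2 * n + 4
      · exact Or.inr (Or.inl hb4)
      · have hblt : b.1 < 2 * n + 4 := by have := b.2; omega
        exact Or.inr (Or.inr ⟨by omega, hblt, snakeLE_from_bot n w b.1 hblt⟩)
    have := hglb.2 hcLB
    have h' : SnakeHatLE n w (2 * n + 3) (2 * n + 5) := this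
    rcases h' with h | h | ⟨_, h, _⟩ <;> omega

/-- The maximum of `Q_w`. -/
def snakeQTop (n : ℕ) (w : ℕ → Letter) : SnakeQ n w :=
  ⟨snakeTopP n w, snakeTopP_meetIrred n w⟩

/-- The minimum of `Q_w`. -/
def snakeQBot (n : ℕ) (w : ℕ → Letter) : SnakeQ n w :=
  ⟨snakeBotP n w, snakeBotP_meetIrred n w⟩

theorem le_snakeQTop (n : ℕ) (w : ℕ → Letter) (q : SnakeQ n w) : q ≤ snakeQTop n w := by
  show q.1 ≤ snakeTopP n w
  show SnakeHatLE n w q.1.1 0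
  by_cases h5 : q.1.1 = 2 * n + 5
  · exact Or.inl h5
  by_cases h4 : q.1.1 = 2 * n + 4
  · exfalso
    apply q.2.1
    intro b
    show SnakeHatLE n w b.1 q.1.1
    rw [h4]
    exact Or.inr (Or.inl rfl)
  · have hlt : q.1.1 < 2 * n + 4 := by have := q.1.2; omega
    exact Or.inr (Or.inr ⟨hlt, by omega, snakeLE_to_zero n w q.1.1 hlt⟩)

theorem snakeQBot_le (n : ℕ) (w : ℕ → Letter) (q : SnakeQ n w) : snakeQBot n w ≤ q := by
  show (snakeBotP n w) ≤ q.1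
  exact Or.inl rfl

theorem stmt10 (n : ℕ) (w : ℕ → Letter) (hw : InV n w) :
    ∀ Z : Set (SnakeQ n w → ℝ), Z ⊆ OPVertexSet (SnakeQ n w) → IsAffCircuit Z →
      (fun _ => (0 : ℝ)) ∉ Z ∧ (fun _ => (1 : ℝ)) ∉ Z := by
  intro Z hZ hcirc
  have hvert : ∀ u ∈ Z, ∃ A : Set (SnakeQ n w), (∀ a ∈ A, ∀ b, a ≤ b → b ∈ A) ∧
      u = A.indicator fun _ => (1 : ℝ) := fun u hu => hZ hu
  constructor
  · intro h0
    have hssub : Z \ {(fun _ => (0 : ℝ))} ⊂ Z := by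
      constructor
      · exact Set.diff_subset
      · intro hsub
        exact (hsub h0).2 rfl
    have hY := hcirc.2 _ hssub
    apply hcirc.1
    refine circuit_key Z (fun _ => (0 : ℝ)) (snakeQTop n w) 0 1 (by norm_num) rfl ?_ hY
    intro u huZ hune
    obtain ⟨A, hAf, hAu⟩ := hvert u huZ
    have hAne : ∃ a, a ∈ A := by
      by_contra hn
      push_neg at hn
      apply hune
      rw [hAu]
      funext q
      exact Set.indicator_of_notMem (hn q) _
    obtain ⟨a, ha⟩ := hAne
    have hM : snakeQTop n w ∈ A := hAf a ha _ (le_snakeQTop n w a)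
    rw [hAu]
    exact Set.indicator_of_mem hM _
  · intro h1
    have hssub : Z \ {(fun _ => (1 : ℝ))} ⊂ Z := by
      constructor
      · exact Set.diff_subset
      · intro hsub
        exact (hsub h1).2 rfl
    have hY := hcirc.2 _ hssub
    apply hcirc.1
    refine circuit_key Z (fun _ => (1 : ℝ)) (snakeQBot n w) 1 0 (by norm_num) rfl ?_ hY
    intro u huZ hune
    obtain ⟨A, hAf, hAu⟩ := hvert u huZ
    have hm : snakeQBot n w ∉ A := by
      intro hmem
      apply hune
      rw [hAu]
      funext q
      exact Set.indicator_of_mem (hAf _ hmem q (snakeQBot_le n w q)) _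
    rw [hAu]
    exact Set.indicator_of_notMem hm _
end

section
/- Let w ∈ 𝒱 be a generalized snake word. Every circuit Z of the vertex set V(Q_w) of the order polytope O(Q_w) admits a partition Z = Z₊ ∪ Z₋ into two disjoint nonempty subsets such that ∑_{v ∈ Z₊} v = ∑_{v ∈ Z₋} v (an affine dependence in which every element of Z appears with coefficient ±1) and |Z₊| = |Z₋|; in particular every circuit of V(Q_w) has an even number of elements. -/
set_option linter.unusedSectionVars false

section Core

open Finset

attribute [local instance] Classical.propDecidable

variable {α : Type*} [PartialOrder α] [Fintype α]

noncomputable def cnt (side : α → Bool) (s : Bool) (v : α → ℝ) : ℕ :=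
  (Finset.univ.filter fun q => side q = s ∧ v q = 1).card

noncomputable def rnk (side : α → Bool) (q : α) : ℕ :=
  (Finset.univ.filter fun p => side p = side q ∧ q ≤ p).card

theorem cnt_eq (side : α → Bool) (s : Bool) {A : Set α} :
    cnt side s (A.indicator fun _ => (1:ℝ)) =
      (Finset.univ.filter fun p => side p = s ∧ p ∈ A).card := by
  unfold cnt
  congr 1
  apply Finset.filter_congr
  intro p _
  constructor
  · rintro ⟨h1, h2⟩
    refine ⟨h1, ?_⟩
    by_contra hp
    rw [Set.indicator_of_notMem hp] at h2
    norm_num at h2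
  · rintro ⟨h1, h2⟩
    exact ⟨h1, by rw [Set.indicator_of_mem h2]⟩

theorem mem_iff_rnk_le (side : α → Bool)
    (hside : ∀ p q : α, side p = side q → p ≤ q ∨ q ≤ p)
    {A : Set α} (hA : ∀ a ∈ A, ∀ b, a ≤ b → b ∈ A) (q : α) :
    q ∈ A ↔ rnk side q ≤ cnt side (side q) (A.indicator fun _ => (1:ℝ)) := by
  rw [cnt_eq]
  constructor
  · intro hq
    apply Finset.card_le_card
    intro p hp
    simp only [Finset.mem_filter, Finset.mem_univ, true_and] at hp ⊢
    exact ⟨hp.1, hA q hq p hp.2⟩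
  · intro hc
    by_contra hq
    have hsub : (Finset.univ.filter fun p => side p = side q ∧ p ∈ A) ⊆
        (Finset.univ.filter fun p => side p = side q ∧ q ≤ p).erase q := by
      intro p hp
      simp only [Finset.mem_filter, Finset.mem_univ, true_and] at hp
      rcases hside p q hp.1 with h | h
      · rcases eq_or_lt_of_le h with rfl | hlt
        · exact absurd hp.2 hq
        · exact absurd (hA p hp.2 q hlt.le) hq
      · refine Finset.mem_erase.2 ⟨?_, by simp [hp.1, h]⟩
        rintro rfl; exact hq hp.2
    have hqmem : q ∈ (Finset.univ.filter fun p => side p = side q ∧ q ≤ p) := by simp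
    have hcard := (Finset.card_le_card hsub).trans_lt (Finset.card_erase_lt_of_mem hqmem)
    unfold rnk at hc
    omega

theorem stair (side : α → Bool)
    (hside : ∀ p q : α, side p = side q → p ≤ q ∨ q ≤ p)
    {v : α → ℝ} (hv : v ∈ OPVertexSet α) (q : α) :
    v q = if rnk side q ≤ cnt side (side q) v then (1:ℝ) else 0 := by
  obtain ⟨A, hA, rfl⟩ := hv
  rw [Set.indicator_apply]
  exact if_congr (mem_iff_rnk_le side hside hA q) rfl rfl

theorem vertex_ext (side : α → Bool)
    (hside : ∀ p q : α, side p = side q → p ≤ q ∨ q ≤ p)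
    {v v' : α → ℝ} (hv : v ∈ OPVertexSet α) (hv' : v' ∈ OPVertexSet α)
    (h : ∀ s, cnt side s v = cnt side s v') : v = v' := by
  funext q
  rw [stair side hside hv q, stair side hside hv' q, h (side q)]

/-- there is an element realizing the count as its rank -/
theorem realize (side : α → Bool)
    (hside : ∀ p q : α, side p = side q → p ≤ q ∨ q ≤ p)
    {v : α → ℝ} (hv : v ∈ OPVertexSet α) (s : Bool) (hpos : 1 ≤ cnt side s v) :
    ∃ q : α, side q = s ∧ rnk side q = cnt side s v := by
  obtain ⟨A, hA, rfl⟩ := hv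
  rw [cnt_eq] at hpos ⊢
  set F := Finset.univ.filter fun p => side p = s ∧ p ∈ A with hF
  have hne : F.Nonempty := Finset.card_pos.1 hpos
  obtain ⟨q, hqF, hqmin'⟩ := Finset.exists_minimal hne
  have hqmin : ∀ x ∈ F, ¬ x < q := fun x hx hlt => hlt.not_ge (hqmin' hx hlt.le)
  simp only [hF, Finset.mem_filter, Finset.mem_univ, true_and] at hqF
  refine ⟨q, hqF.1, ?_⟩
  unfold rnk
  congr 1
  rw [hF]
  apply Finset.filter_congr
  intro p _
  simp only [hqF.1]
  constructor
  · rintro ⟨h1, h2⟩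
    exact ⟨h1, hA q hqF.2 p h2⟩
  · rintro ⟨h1, h2⟩
    refine ⟨h1, ?_⟩
    have hcomp := hside p q (h1.trans hqF.1.symm)
    rcases hcomp with h | h
    · rcases eq_or_lt_of_le h with rfl | hlt
      · exact le_refl _
      · exact absurd hlt (hqmin p (by simp [hF, h1, h2]))
    · exact h

section Dep

variable (side : α → Bool)
  (hside : ∀ p q : α, side p = side q → p ≤ q ∨ q ≤ p)
  (ZF : Finset (α → ℝ)) (hZ : ↑ZF ⊆ OPVertexSet α)
  (c : (α → ℝ) → ℝ)
  (hc0 : ∑ v ∈ ZF, c v = 0)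
  (hvec : ∀ q : α, ∑ v ∈ ZF, c v * v q = 0)

include hside hZ hc0 hvec

theorem thresh_sum (s : Bool) (h : ℕ) :
    ∑ v ∈ ZF.filter (fun v => h ≤ cnt side s v), c v = 0 := by
  rcases Nat.eq_zero_or_pos h with rfl | hpos
  · rw [Finset.filter_true_of_mem (fun v _ => Nat.zero_le _)]
    exact hc0
  by_cases hne : (ZF.filter fun v => h ≤ cnt side s v).Nonempty
  · obtain ⟨v₀, hv₀, hmin⟩ := Finset.exists_min_image _ (fun v => cnt side s v) hne
    rw [Finset.mem_filter] at hv₀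
    obtain ⟨q, hqs, hqr⟩ := realize side hside (hZ hv₀.1) s (le_trans hpos hv₀.2)
    have key : ∀ v ∈ ZF, (if h ≤ cnt side s v then c v else 0) = c v * v q := by
      intro v hv
      have hst := stair side hside (hZ hv) q
      rw [hqs, hqr] at hst
      by_cases hP : h ≤ cnt side s v
      · have : cnt side s v₀ ≤ cnt side s v :=
          hmin v (Finset.mem_filter.2 ⟨hv, hP⟩)
        rw [if_pos hP, if_pos this] at *
        rw [hst]; ring
      · have : ¬ cnt side s v₀ ≤ cnt side s v := by
          intro hle; exact hP (le_trans hv₀.2 hle)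
        rw [if_neg hP, if_neg this] at *
        rw [hst]; ring
    rw [Finset.sum_filter]
    rw [Finset.sum_congr rfl key]
    exact hvec q
  · rw [Finset.not_nonempty_iff_eq_empty] at hne
    rw [hne, Finset.sum_empty]

theorem row_sum (s : Bool) (m : ℕ) :
    ∑ v ∈ ZF.filter (fun v => cnt side s v = m), c v = 0 := by
  have h1 := thresh_sum side hside ZF hZ c hc0 hvec s m
  have h2 := thresh_sum side hside ZF hZ c hc0 hvec s (m + 1)
  have hsplit : ZF.filter (fun v => m ≤ cnt side s v) =
      ZF.filter (fun v => cnt side s v = m) ∪ ZF.filter (fun v => m + 1 ≤ cnt side s v) := by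
    ext v
    simp only [Finset.mem_filter, Finset.mem_union]
    constructor
    · rintro ⟨hv, hm⟩
      rcases Nat.eq_or_lt_of_le hm with he | hl
      · exact Or.inl ⟨hv, he.symm⟩
      · exact Or.inr ⟨hv, hl⟩
    · rintro (⟨hv, hm⟩ | ⟨hv, hm⟩)
      · exact ⟨hv, hm.ge⟩
      · exact ⟨hv, by omega⟩
  have hdisj : Disjoint (ZF.filter (fun v => cnt side s v = m))
      (ZF.filter (fun v => m + 1 ≤ cnt side s v)) := by
    rw [Finset.disjoint_left]
    intro v hv1 hv2
    rw [Finset.mem_filter] at hv1 hv2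
    omega
  rw [hsplit, Finset.sum_union hdisj] at h1
  linarith

theorem step_exists (s : Bool) (v : α → ℝ) (hv : v ∈ ZF) (hcv : c v ≠ 0) :
    ∃ v', (v' ∈ ZF ∧ c v' ≠ 0) ∧ cnt side s v' = cnt side s v ∧ c v' * c v < 0 := by
  have hrow := row_sum side hside ZF hZ c hc0 hvec s (cnt side s v)
  by_contra hcon
  push_neg at hcon
  set R := ZF.filter (fun v' => cnt side s v' = cnt side s v) with hR
  have hvR : v ∈ R := Finset.mem_filter.2 ⟨hv, rfl⟩
  have hpos : 0 < ∑ v' ∈ R, c v' * c v := by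
    apply Finset.sum_pos'
    · intro v' hv'
      rw [hR, Finset.mem_filter] at hv'
      by_cases hz : c v' = 0
      · rw [hz, zero_mul]
      · exact hcon v' ⟨hv'.1, hz⟩ hv'.2
    · exact ⟨v, hvR, mul_self_pos.2 hcv⟩
  rw [← Finset.sum_mul, hrow, zero_mul] at hpos
  exact lt_irrefl 0 hpos

theorem walk_exists (v0 : α → ℝ) (h0 : v0 ∈ ZF) (hc00 : c v0 ≠ 0) :
    ∃ f : ℕ → (α → ℝ), f 0 = v0 ∧ (∀ k, f k ∈ ZF ∧ c (f k) ≠ 0) ∧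
      (∀ k, cnt side (decide (k % 2 = 0)) (f (k+1)) = cnt side (decide (k % 2 = 0)) (f k)) ∧
      (∀ k, c (f (k+1)) * c (f k) < 0) := by
  have hstep : ∀ (vs : {v : α → ℝ // v ∈ ZF ∧ c v ≠ 0}) (s : Bool),
      ∃ v' : {v : α → ℝ // v ∈ ZF ∧ c v ≠ 0},
        cnt side s v'.1 = cnt side s vs.1 ∧ c v'.1 * c vs.1 < 0 := by
    rintro ⟨v, hv, hcv⟩ s
    obtain ⟨v', hv', h1, h2⟩ := step_exists side hside ZF hZ c hc0 hvec s v hv hcv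
    exact ⟨⟨v', hv'⟩, h1, h2⟩
  choose nxt hn1 hn2 using hstep
  let f : ℕ → {v : α → ℝ // v ∈ ZF ∧ c v ≠ 0} :=
    fun k => Nat.rec ⟨v0, h0, hc00⟩ (fun k fk => nxt fk (decide (k % 2 = 0))) k
  have hfs : ∀ k, f (k+1) = nxt (f k) (decide (k % 2 = 0)) := fun k => rfl
  refine ⟨fun k => (f k).1, rfl, fun k => (f k).2, fun k => ?_, fun k => ?_⟩
  · have h := hn1 (f k) (decide (k % 2 = 0)); rw [← hfs k] at h; exact h
  · have h := hn2 (f k) (decide (k % 2 = 0)); rw [← hfs k] at h; exact h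

end Dep

theorem sign_alt {V : Type*} (c : V → ℝ) (f : ℕ → V)
    (h : ∀ k, c (f (k+1)) * c (f k) < 0) :
    ∀ k, (0 < c (f k)) ↔ (k % 2 = 0 ↔ 0 < c (f 0)) := by
  intro k
  induction k with
  | zero => simp
  | succ k ih =>
    have hk := h k
    have h1 : (0 < c (f (k+1))) ↔ ¬ (0 < c (f k)) := by
      constructor
      · intro hp hp2; nlinarith
      · intro hnp
        rcases lt_trichotomy (c (f k)) 0 with hlt | heq | hgt
        · nlinarith
        · rw [heq] at hk; simp at hk
        · exact absurd hgt hnp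
    rw [h1, ih]
    have hpar : ((k+1) % 2 = 0) ↔ ¬ (k % 2 = 0) := by omega
    rw [hpar]
    tauto

theorem parity_of_eq {V : Type*} (c : V → ℝ) (f : ℕ → V)
    (h : ∀ k, c (f (k+1)) * c (f k) < 0) {i j : ℕ} (hij : f i = f j) :
    i % 2 = j % 2 := by
  have hi := sign_alt c f h i
  have hj := sign_alt c f h j
  rw [hij] at hi
  by_cases hb : 0 < c (f 0) <;> by_cases hfj : 0 < c (f j) <;>
    simp [hb, hfj] at hi hj <;> omega

theorem telescope (g : ℕ → ℝ) :
    ∀ (m a : ℕ), (∀ j, a ≤ j → j < a + 2*m → j % 2 = a % 2 → g (j+1) = g j) →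
    ∑ j ∈ Finset.Ico a (a + 2*m), (-1:ℝ)^j * g j = 0 := by
  intro m
  induction m with
  | zero => intro a _; simp
  | succ m ih =>
    intro a hg
    have h1 : a + 2*(m+1) = (a + 2*m) + 1 + 1 := by ring
    rw [h1, Finset.sum_Ico_succ_top (by omega), Finset.sum_Ico_succ_top (by omega)]
    have h2 : g (a + 2*m + 1) = g (a + 2*m) := hg (a + 2*m) (by omega) (by omega) (by omega)
    have h3 : (-1:ℝ)^(a + 2*m + 1) = -(-1:ℝ)^(a + 2*m) := by
      rw [pow_succ]; ring
    rw [ih a (fun j hj1 hj2 hj3 => hg j hj1 (by omega) hj3), h2, h3]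
    ring

theorem shift_window (g : ℕ → ℝ) (a d : ℕ) (hd : d % 2 = 0) (hga : g (a + d) = g a) :
    ∑ j ∈ Finset.Ico a (a + d), (-1:ℝ)^j * g j =
      ∑ j ∈ Finset.Ico (a+1) (a+1+d), (-1:ℝ)^j * g j := by
  rcases Nat.eq_zero_or_pos d with rfl | hdpos
  · simp
  have e1 : ∑ j ∈ Finset.Ico a (a + d), (-1:ℝ)^j * g j =
      (-1:ℝ)^a * g a + ∑ j ∈ Finset.Ico (a+1) (a + d), (-1:ℝ)^j * g j :=
    Finset.sum_eq_sum_Ico_succ_bot (by omega) _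
  have e2 : ∑ j ∈ Finset.Ico (a+1) (a+1+d), (-1:ℝ)^j * g j =
      ∑ j ∈ Finset.Ico (a+1) (a + d), (-1:ℝ)^j * g j + (-1:ℝ)^(a+d) * g (a+d) := by
    have : a+1+d = (a+d)+1 := by ring
    rw [this, Finset.sum_Ico_succ_top (by omega)]
  have e3 : (-1:ℝ)^(a+d) = (-1:ℝ)^a := by
    rw [pow_add, (Nat.even_iff.2 hd).neg_one_pow, mul_one]
  rw [e1, e2, e3, hga]
  ring

theorem core_circuit (side : α → Bool)
    (hside : ∀ p q : α, side p = side q → p ≤ q ∨ q ≤ p)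
    (Z : Set (α → ℝ)) (hZsub : Z ⊆ OPVertexSet α) (hcirc : IsAffCircuit Z) :
    Even Z.ncard ∧
      ∃ Zp Zm : Set (α → ℝ),
        Zp ∪ Zm = Z ∧ Disjoint Zp Zm ∧ Zp.Nonempty ∧ Zm.Nonempty ∧
          (∑ᶠ v ∈ Zp, v) = (∑ᶠ v ∈ Zm, v) ∧ Zp.ncard = Zm.ncard := by
  classical
  -- finiteness
  have hfinOP : (OPVertexSet α).Finite := by
    apply Set.Finite.subset (Set.finite_range (fun A : Set α => A.indicator fun _ => (1:ℝ)))
    rintro v ⟨A, hA, rfl⟩; exact ⟨A, rfl⟩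
  have hZfin : Z.Finite := hfinOP.subset hZsub
  obtain ⟨ZF, hZF⟩ : ∃ ZF : Finset (α → ℝ), ↑ZF = Z :=
    ⟨hZfin.toFinset, Set.Finite.coe_toFinset _⟩
  subst hZF
  -- extract a nontrivial dependence
  have hnAI := hcirc.1
  rw [affineIndependent_iff] at hnAI
  push_neg at hnAI
  obtain ⟨s, wt, hw0, hwv, i, his, hwi⟩ := hnAI
  set c : (α → ℝ) → ℝ := fun v =>
    if h : v ∈ (↑ZF : Set (α → ℝ)) then (if ⟨v, h⟩ ∈ s then wt ⟨v, h⟩ else 0) else 0 with hc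
  have hcval : ∀ (j : (↑ZF : Set (α → ℝ))), c j.1 = if j ∈ s then wt j else 0 := by
    rintro ⟨v, hv⟩
    simp only [hc, dif_pos hv]
  have hc0 : ∑ v ∈ ZF, c v = 0 := by
    rw [← Finset.sum_finset_coe]
    rw [Finset.sum_congr rfl (fun j _ => hcval j)]
    rw [Finset.sum_ite_mem, Finset.univ_inter]
    exact hw0
  have hvec : ∀ q : α, ∑ v ∈ ZF, c v * v q = 0 := by
    intro q
    have := congrFun hwv q
    rw [Finset.sum_apply] at this
    simp only [Pi.smul_apply, smul_eq_mul, Pi.zero_apply] at this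
    rw [← Finset.sum_finset_coe (f := fun v => c v * v q)]
    calc ∑ j : (↑ZF : Set (α → ℝ)), c j.1 * j.1 q
        = ∑ j : (↑ZF : Set (α → ℝ)), (if j ∈ s then wt j * j.1 q else 0) := by
          refine Finset.sum_congr rfl fun j _ => ?_
          rw [hcval j]; split <;> ring
      _ = ∑ j ∈ Finset.univ ∩ s, wt j * j.1 q := by rw [Finset.sum_ite_mem]
      _ = 0 := by rw [Finset.univ_inter]; exact this
  have hinz : c i.1 ≠ 0 := by rw [hcval i, if_pos his]; exact hwi
  -- the alternating walk
  obtain ⟨f, hf0, hfm, hstep, hsign⟩ :=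
    walk_exists side hside ZF hZsub c hc0 hvec i.1 i.2 hinz
  -- pigeonhole: a repeat
  obtain ⟨k, l, hkl, hfeq⟩ := Finite.exists_ne_map_eq_of_infinite
    (fun k : ℕ => (⟨f (2*k), (hfm (2*k)).1⟩ : {v // v ∈ ZF}))
  have hfeq' : f (2*k) = f (2*l) := congrArg Subtype.val hfeq
  have hD : ∃ d, 1 ≤ d ∧ ∃ i0, f (i0 + d) = f i0 := by
    rcases Nat.lt_or_ge k l with h | h
    · exact ⟨2*l - 2*k, by omega, 2*k, by
        rw [show 2*k + (2*l - 2*k) = 2*l by omega]; exact hfeq'.symm⟩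
    · have h' : k > l := by omega
      exact ⟨2*k - 2*l, by omega, 2*l, by
        rw [show 2*l + (2*k - 2*l) = 2*k by omega]; exact hfeq'⟩
  set d := Nat.find hD with hdd
  obtain ⟨hd1, i0, hi0⟩ := Nat.find_spec hD
  have hdpar : d % 2 = 0 := by
    have := parity_of_eq c f hsign hi0
    omega
  have hd2 : 2 ≤ d := by omega
  -- distinctness within the window
  have hdist : ∀ j j', i0 ≤ j → j < j' → j' < i0 + d → f j ≠ f j' := by
    intro j j' hj hjj hj' heq
    have : 1 ≤ j' - j ∧ ∃ a, f (a + (j' - j)) = f a :=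
      ⟨by omega, j, by rw [show j + (j' - j) = j' by omega]; exact heq.symm⟩
    exact absurd this (Nat.find_min hD (by omega))
  set I : Finset ℕ := Finset.Ico i0 (i0 + d) with hI
  have hinj : ∀ j ∈ I, ∀ j' ∈ I, f j = f j' → j = j' := by
    intro j hj j' hj' heq
    rw [hI, Finset.mem_Ico] at hj hj'
    rcases lt_trichotomy j j' with h | h | h
    · exact absurd heq (hdist j j' hj.1 h hj'.2)
    · exact h
    · exact absurd heq.symm (hdist j' j hj'.1 h hj.2)
  obtain ⟨m, hm⟩ : ∃ m, d = 2*m := ⟨d/2, by omega⟩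
  have hflip : ∀ a b : ℕ, a % 2 ≠ b % 2 → (decide (a % 2 = 0) : Bool) = !decide (b % 2 = 0) := by
    intro a b hab
    rcases Nat.mod_two_eq_zero_or_one a with h1 | h1 <;>
      rcases Nat.mod_two_eq_zero_or_one b with h2 | h2 <;> simp [h1, h2] at hab ⊢
  have hsame : ∀ a b : ℕ, a % 2 = b % 2 → (decide (a % 2 = 0) : Bool) = decide (b % 2 = 0) := by
    intro a b hab; rw [hab]
  -- the key coordinate identity
  have hcoord : ∀ g : ℕ → ℝ, (∀ j j', f j = f j' → g j = g j') →
      (∃ sb : Bool, ∀ j, cnt side sb (f (j+1)) = cnt side sb (f j) → g (j+1) = g j) →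
      ∑ j ∈ I, (-1:ℝ)^j * g j = 0 := by
    intro g hgf ⟨sb, hg⟩
    by_cases hpar : (decide (i0 % 2 = 0) : Bool) = sb
    · rw [hI, show i0 + d = i0 + 2*m from by omega]
      apply telescope g m i0
      intro j _ _ hj3
      apply hg
      have : (decide (j % 2 = 0) : Bool) = sb := by rw [hsame j i0 hj3]; exact hpar
      rw [← this]
      exact hstep j
    · have hsb : sb = !(decide (i0 % 2 = 0) : Bool) := Bool.eq_not_iff.mpr (Ne.symm hpar)
      rw [hI, shift_window g i0 d hdpar (hgf _ _ hi0),
        show i0 + 1 + d = (i0 + 1) + 2*m from by omega]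
      apply telescope g m (i0 + 1)
      intro j _ _ hj3
      apply hg
      have : (decide (j % 2 = 0) : Bool) = sb := by
        rw [hflip j i0 (by omega), ← hsb]
      rw [← this]
      exact hstep j
  -- coordinate sums vanish
  have hq0 : ∀ q : α, ∑ j ∈ I, (-1:ℝ)^j * (f j) q = 0 := by
    intro q
    apply hcoord (fun j => (f j) q) (fun j j' h => congrFun h q)
    refine ⟨side q, fun j hc => ?_⟩
    rw [stair side hside (hZsub (hfm (j+1)).1) q, stair side hside (hZsub (hfm j).1) q, hc]
  have hone : ∑ j ∈ I, (-1:ℝ)^j * 1 = 0 :=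
    hcoord (fun _ => 1) (fun _ _ _ => rfl) ⟨true, fun _ _ => rfl⟩
  have hi0I : i0 ∈ I := by rw [hI, Finset.mem_Ico]; omega
  have hi1I : i0 + 1 ∈ I := by rw [hI, Finset.mem_Ico]; omega
  -- the window image
  set W : Finset (α → ℝ) := I.image f with hW
  have hWsub : ↑W ⊆ (↑ZF : Set (α → ℝ)) := by
    intro v hv
    rw [Finset.mem_coe, hW, Finset.mem_image] at hv
    obtain ⟨j, _, rfl⟩ := hv
    exact (hfm j).1
  have hIinjOn : Set.InjOn f ↑I := fun a ha b hb h => hinj a ha b hb h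
  set e : (α → ℝ) → ℝ := fun v => ∑ j ∈ I, if f j = v then (-1:ℝ)^j else 0 with he
  have he_fj : ∀ j ∈ I, e (f j) = (-1:ℝ)^j := by
    intro j hj
    show (∑ j' ∈ I, if f j' = f j then (-1:ℝ)^j' else 0) = (-1:ℝ)^j
    rw [Finset.sum_eq_single_of_mem j hj fun b hb hbj => by
      rw [if_neg fun hfb => hbj (hinj b hb j hj hfb)]]
    exact if_pos rfl
  have htrans : ∀ g : (α → ℝ) → ℝ,
      ∑ v ∈ W, e v * g v = ∑ j ∈ I, (-1:ℝ)^j * g (f j) := by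
    intro g
    rw [hW, Finset.sum_image hinj]
    exact Finset.sum_congr rfl fun j hj => by rw [he_fj j hj]
  have hesum : ∑ v ∈ W, e v = 0 := by
    have := htrans (fun _ => 1)
    simp only [mul_one] at this
    rw [this]
    simpa using hone
  have heval : ∀ q : α, ∑ v ∈ W, e v * v q = 0 := by
    intro q
    rw [htrans (fun v => v q)]
    exact hq0 q
  -- the window is all of Z
  have hWZ : ↑W = (↑ZF : Set (α → ℝ)) := by
    by_contra hne
    have hAI := hcirc.2 ↑W (ssubset_of_subset_of_ne hWsub hne)
    rw [affineIndependent_iff] at hAI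
    have h1 : ∑ v : (↑W : Set (α → ℝ)), e v.1 = 0 := by
      rw [Finset.sum_finset_coe]; exact hesum
    have h2 : ∑ v : (↑W : Set (α → ℝ)), e v.1 • (v.1 : α → ℝ) = 0 := by
      funext q
      rw [Finset.sum_apply]
      simp only [Pi.smul_apply, smul_eq_mul, Pi.zero_apply]
      rw [Finset.sum_finset_coe (f := fun v => e v * v q)]
      exact heval q
    have hfi0 : f i0 ∈ (↑W : Set (α → ℝ)) := by
      rw [Finset.mem_coe, hW, Finset.mem_image]
      exact ⟨i0, hi0I, rfl⟩
    have h3 := hAI Finset.univ (fun v => e v.1) h1 h2 ⟨f i0, hfi0⟩ (Finset.mem_univ _)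
    have h4 : e (f i0) = 0 := h3
    rw [he_fj i0 hi0I] at h4
    exact pow_ne_zero i0 (by norm_num : (-1:ℝ) ≠ 0) h4
  have hIcard : I.card = d := by rw [hI, Nat.card_Ico]; omega
  have hcardZ : (↑ZF : Set (α → ℝ)).ncard = d := by
    rw [← hWZ, Set.ncard_coe_finset, hW, Finset.card_image_of_injOn hIinjOn, hIcard]
  set Ip : Finset ℕ := I.filter (fun j => j % 2 = 0) with hIp
  set Im : Finset ℕ := I.filter (fun j => ¬ j % 2 = 0) with hIm
  have hIpinj : Set.InjOn f ↑Ip := hIinjOn.mono (by rw [hIp]; exact Finset.filter_subset _ _)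
  have hIminj : Set.InjOn f ↑Im := hIinjOn.mono (by rw [hIm]; exact Finset.filter_subset _ _)
  set Fp : Finset (α → ℝ) := Ip.image f with hFp
  set Fm : Finset (α → ℝ) := Im.image f with hFm
  -- splitting sums over parity
  have hsplit : ∀ g : ℕ → ℝ, (∑ j ∈ I, (-1:ℝ)^j * g j = 0) →
      ∑ j ∈ Ip, g j = ∑ j ∈ Im, g j := by
    intro g hg
    have h1 : ∑ j ∈ Ip, (-1:ℝ)^j * g j = ∑ j ∈ Ip, g j := by
      refine Finset.sum_congr rfl fun j hj => ?_
      rw [hIp, Finset.mem_filter] at hj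
      rw [(Nat.even_iff.2 hj.2).neg_one_pow, one_mul]
    have h2 : ∑ j ∈ Im, (-1:ℝ)^j * g j = ∑ j ∈ Im, -(g j) := by
      refine Finset.sum_congr rfl fun j hj => ?_
      rw [hIm, Finset.mem_filter] at hj
      rw [(Nat.odd_iff.2 (by omega)).neg_one_pow]
      ring
    have h3 := Finset.sum_filter_add_sum_filter_not I (fun j => j % 2 = 0)
      (fun j => (-1:ℝ)^j * g j)
    rw [← hIp, ← hIm, h1, h2, hg, Finset.sum_neg_distrib] at h3
    linarith
  have hsum_eq : ∑ j ∈ Ip, f j = ∑ j ∈ Im, f j := by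
    funext q
    rw [Finset.sum_apply, Finset.sum_apply]
    exact hsplit (fun j => f j q) (hq0 q)
  have hcard_eq : Ip.card = Im.card := by
    have := hsplit (fun _ => (1:ℝ)) hone
    rw [Finset.sum_const, Finset.sum_const] at this
    simp only [nsmul_eq_mul, mul_one] at this
    exact_mod_cast this
  -- nonemptiness
  have hne2 : (↑Fp : Set (α → ℝ)).Nonempty ∧ (↑Fm : Set (α → ℝ)).Nonempty := by
    rcases Nat.mod_two_eq_zero_or_one i0 with hp | hp
    · exact ⟨⟨f i0, Finset.mem_coe.2 (Finset.mem_image_of_mem f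
          (Finset.mem_filter.2 ⟨hi0I, hp⟩))⟩,
        ⟨f (i0+1), Finset.mem_coe.2 (Finset.mem_image_of_mem f
          (Finset.mem_filter.2 ⟨hi1I, by omega⟩))⟩⟩
    · exact ⟨⟨f (i0+1), Finset.mem_coe.2 (Finset.mem_image_of_mem f
          (Finset.mem_filter.2 ⟨hi1I, by omega⟩))⟩,
        ⟨f i0, Finset.mem_coe.2 (Finset.mem_image_of_mem f
          (Finset.mem_filter.2 ⟨hi0I, by omega⟩))⟩⟩
  refine ⟨by rw [hcardZ]; exact Nat.even_iff.2 hdpar, ↑Fp, ↑Fm, ?_, ?_, hne2.1, hne2.2, ?_, ?_⟩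
  · rw [← Finset.coe_union]
    have : Fp ∪ Fm = W := by
      rw [hFp, hFm, hW, ← Finset.image_union, hIp, hIm,
        Finset.filter_union_filter_not_eq]
    rw [this, hWZ]
  · rw [Set.disjoint_left]
    intro v hv1 hv2
    rw [Finset.mem_coe, hFp, Finset.mem_image] at hv1
    rw [Finset.mem_coe, hFm, Finset.mem_image] at hv2
    obtain ⟨j, hj, rfl⟩ := hv1
    obtain ⟨j', hj', hjj⟩ := hv2
    rw [hIp, Finset.mem_filter] at hj
    rw [hIm, Finset.mem_filter] at hj'
    have := hinj j' hj'.1 j hj.1 hjj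
    omega
  · rw [finsum_mem_coe_finset, finsum_mem_coe_finset,
      Finset.sum_image (fun a ha b hb h => hIpinj ha hb h),
      Finset.sum_image (fun a ha b hb h => hIminj ha hb h)]
    exact hsum_eq
  · rw [Set.ncard_coe_finset, Set.ncard_coe_finset, hFp, hFm,
      Finset.card_image_of_injOn hIpinj, Finset.card_image_of_injOn hIminj, hcard_eq]





end Core


section Snake

variable (n : ℕ) (w : ℕ → Letter)

/-- whether the word turns at step `m` -/
def turn (m : ℕ) : Prop :=
  (m = 1 ∧ w 1 = Letter.L) ∨ (2 ≤ m ∧ w (m - 1) ≠ w m)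

instance (m : ℕ) : Decidable (turn w m) := by unfold turn; infer_instance

/-- parity of the number of turns among steps `1..m` -/
def pturn : ℕ → Bool
  | 0 => false
  | m+1 => xor (pturn m) (decide (turn w (m+1)))

def elA (m : ℕ) : ℕ := if pturn w m then 2*m+2 else 2*m+1
def elB (m : ℕ) : ℕ := if pturn w m then 2*m+1 else 2*m+2

theorem snakeSide_turn {m : ℕ} (h : turn w m) : snakeSide w m = 2*m - 1 := by
  unfold snakeSide turn at *
  rw [if_pos h]

theorem snakeSide_straight {m : ℕ} (h : ¬ turn w m) : snakeSide w m = 2*m := by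
  unfold snakeSide turn at *
  rw [if_neg h]

theorem pturn_succ (m : ℕ) (h : 1 ≤ m) :
    pturn w m = xor (pturn w (m-1)) (decide (turn w m)) := by
  obtain ⟨k, rfl⟩ : ∃ k, m = k+1 := ⟨m-1, by omega⟩
  simp [pturn]

theorem pturn_pos {m : ℕ} (h : pturn w m = true) : 1 ≤ m := by
  by_contra hc
  push_neg at hc
  interval_cases m
  simp [pturn] at h

theorem stepA {m : ℕ} (h1 : 1 ≤ m) (h2 : m ≤ n) :
    SnakeCov n w (elA w m) (elA w (m-1)) := by
  have hps := pturn_succ w m h1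
  by_cases hpt : pturn w (m-1) = true <;> by_cases ht : turn w m
  · -- (true, turn): elA m = 2m+1, elA (m-1) = 2(m-1)+2
    have hm2 : 2 ≤ m := by
      have := pturn_pos w hpt; omega
    have hm : pturn w m = false := by rw [hps, hpt]; simp [ht]
    rw [elA, elA, hm, hpt]
    simp only [if_neg Bool.false_ne_true, if_pos rfl]
    rw [show 2*m+1 = 2*(m-1)+3 by omega]
    exact SnakeCov.covBot (m-1) (by omega) (by omega)
  · -- (true, straight): elA m = 2m+2, elA (m-1) = 2(m-1)+2 = 2m
    have hm : pturn w m = true := by rw [hps, hpt]; simp [ht]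
    rw [elA, elA, hm, hpt]
    simp only [if_pos rfl]
    rw [show 2*(m-1)+2 = snakeSide w m from by rw [snakeSide_straight w ht]; omega]
    exact SnakeCov.covSide m h1 h2
  · -- (false, turn): elA m = 2m+2, elA (m-1) = 2(m-1)+1 = 2m-1
    have hpt' : pturn w (m-1) = false := by simpa using hpt
    have hm : pturn w m = true := by rw [hps, hpt']; simp [ht]
    rw [elA, elA, hm, hpt']
    simp only [if_pos rfl, if_neg Bool.false_ne_true]
    rw [show 2*(m-1)+1 = snakeSide w m from by rw [snakeSide_turn w ht]; omega]
    exact SnakeCov.covSide m h1 h2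
  · -- (false, straight): elA m = 2m+1, elA (m-1) = 2(m-1)+1
    have hpt' : pturn w (m-1) = false := by simpa using hpt
    have hm : pturn w m = false := by rw [hps, hpt']; simp [ht]
    rw [elA, elA, hm, hpt']
    simp only [if_neg Bool.false_ne_true]
    rcases Nat.eq_or_lt_of_le h1 with he | hlt
    · rw [show m = 1 from he.symm]
      norm_num
      exact SnakeCov.cov31
    · rw [show 2*m+1 = 2*(m-1)+3 by omega]
      have : 2*(m-1)+1 = 2*(m-1)+1 := rfl
      exact SnakeCov.covOdd (m-1) (by omega) (by omega)

theorem stepB {m : ℕ} (h1 : 1 ≤ m) (h2 : m ≤ n) :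
    SnakeCov n w (elB w m) (elB w (m-1)) := by
  have hps := pturn_succ w m h1
  by_cases hpt : pturn w (m-1) = true <;> by_cases ht : turn w m
  · -- (true, turn): elB m = 2m+2, elB (m-1) = 2(m-1)+1 = 2m-1
    have hm2 : 2 ≤ m := by have := pturn_pos w hpt; omega
    have hm : pturn w m = false := by rw [hps, hpt]; simp [ht]
    rw [elB, elB, hm, hpt]
    simp only [if_neg Bool.false_ne_true, if_pos rfl]
    rw [show 2*(m-1)+1 = snakeSide w m from by rw [snakeSide_turn w ht]; omega]
    exact SnakeCov.covSide m h1 h2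
  · -- (true, straight): elB m = 2m+1, elB (m-1) = 2(m-1)+1
    have hm2 : 2 ≤ m := by have := pturn_pos w hpt; omega
    have hm : pturn w m = true := by rw [hps, hpt]; simp [ht]
    rw [elB, elB, hm, hpt]
    simp only [if_pos rfl]
    rw [show 2*m+1 = 2*(m-1)+3 by omega]
    exact SnakeCov.covOdd (m-1) (by omega) (by omega)
  · -- (false, turn): elB m = 2m+1, elB (m-1) = 2(m-1)+2 = 2m
    have hpt' : pturn w (m-1) = false := by simpa using hpt
    have hm : pturn w m = true := by rw [hps, hpt']; simp [ht]
    rw [elB, elB, hm, hpt']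
    simp only [if_pos rfl, if_neg Bool.false_ne_true]
    rcases Nat.eq_or_lt_of_le h1 with he | hlt
    · rw [show m = 1 from he.symm]
      norm_num
      exact SnakeCov.cov32
    · rw [show 2*m+1 = 2*(m-1)+3 by omega]
      exact SnakeCov.covBot (m-1) (by omega) (by omega)
  · -- (false, straight): elB m = 2m+2, elB (m-1) = 2(m-1)+2 = 2m
    have hpt' : pturn w (m-1) = false := by simpa using hpt
    have hm : pturn w m = false := by rw [hps, hpt']; simp [ht]
    rw [elB, elB, hm, hpt']
    simp only [if_neg Bool.false_ne_true]
    rw [show 2*(m-1)+2 = snakeSide w m from by rw [snakeSide_straight w ht]; omega]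
    exact SnakeCov.covSide m h1 h2
  
theorem chainA {m m' : ℕ} (h : m ≤ m') (h2 : m' ≤ n) :
    SnakeLE n w (elA w m') (elA w m) := by
  induction m' with
  | zero =>
    rw [show m = 0 by omega]
    exact Relation.ReflTransGen.refl
  | succ k ih =>
    rcases Nat.eq_or_lt_of_le h with he | hlt
    · rw [he]
      exact Relation.ReflTransGen.refl
    · exact Relation.ReflTransGen.trans
        (Relation.ReflTransGen.single
          (by simpa using stepA n w (m := k+1) (by omega) h2))
        (ih (by omega) (by omega))

theorem chainB {m m' : ℕ} (h : m ≤ m') (h2 : m' ≤ n) :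
    SnakeLE n w (elB w m') (elB w m) := by
  induction m' with
  | zero =>
    rw [show m = 0 by omega]
    exact Relation.ReflTransGen.refl
  | succ k ih =>
    rcases Nat.eq_or_lt_of_le h with he | hlt
    · rw [he]
      exact Relation.ReflTransGen.refl
    · exact Relation.ReflTransGen.trans
        (Relation.ReflTransGen.single
          (by simpa using stepB n w (m := k+1) (by omega) h2))
        (ih (by omega) (by omega))

theorem le0A {m : ℕ} (h2 : m ≤ n) : SnakeLE n w (elA w m) 0 := by
  refine Relation.ReflTransGen.trans (chainA n w (Nat.zero_le m) h2) ?_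
  have : elA w 0 = 1 := by simp [elA, pturn]
  rw [this]
  exact Relation.ReflTransGen.single SnakeCov.cov10

theorem le0B {m : ℕ} (h2 : m ≤ n) : SnakeLE n w (elB w m) 0 := by
  refine Relation.ReflTransGen.trans (chainB n w (Nat.zero_le m) h2) ?_
  have : elB w 0 = 2 := by simp [elB, pturn]
  rw [this]
  exact Relation.ReflTransGen.single SnakeCov.cov20

theorem botA {m : ℕ} (h2 : m ≤ n) : SnakeLE n w (2*n+3) (elA w m) := by
  refine Relation.ReflTransGen.trans ?_ (chainA n w h2 le_rfl)
  by_cases hp : pturn w n = true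
  · have hn1 := pturn_pos w hp
    rw [elA, if_pos hp]
    exact Relation.ReflTransGen.single (SnakeCov.covBot n hn1 le_rfl)
  · rw [elA, if_neg hp]
    rcases Nat.eq_zero_or_pos n with rfl | hn1
    · exact Relation.ReflTransGen.single (by simpa using SnakeCov.cov31 (n := 0) (w := w))
    · exact Relation.ReflTransGen.single (SnakeCov.covOdd n hn1 le_rfl)

theorem le0_bot : SnakeLE n w (2*n+3) 0 :=
  Relation.ReflTransGen.trans (botA n w (Nat.zero_le n)) (le0A n w (Nat.zero_le n))

/-- which of the two chains an element of `P̂(w)` lies on -/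
def sideNat (x : ℕ) : Bool :=
  if x = 0 ∨ 2*n+3 ≤ x then true
  else if x % 2 = 1 then !(pturn w ((x-1)/2)) else pturn w ((x-2)/2)

theorem sideA_char {x : ℕ} (hx : x < 2*n+4) (hs : sideNat n w x = true) :
    x = 0 ∨ x = 2*n+3 ∨ ∃ m, m ≤ n ∧ x = elA w m := by
  by_cases h0 : x = 0 ∨ 2*n+3 ≤ x
  · rcases h0 with h0 | h0
    · exact Or.inl h0
    · exact Or.inr (Or.inl (by omega))
  · push_neg at h0
    rw [sideNat, if_neg (by push_neg; exact h0)] at hs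
    right; right
    rcases Nat.mod_two_eq_zero_or_one x with hpar | hpar
    · refine ⟨(x-2)/2, by omega, ?_⟩
      rw [if_neg (by omega)] at hs
      rw [elA, if_pos hs]
      omega
    · refine ⟨(x-1)/2, by omega, ?_⟩
      rw [if_pos hpar] at hs
      have : pturn w ((x-1)/2) = false := by
        cases hpte : pturn w ((x-1)/2)
        · rfl
        · rw [hpte] at hs; simp at hs
      rw [elA, if_neg (by rw [this]; exact Bool.false_ne_true)]
      omega

theorem sideB_char {x : ℕ} (hx : x < 2*n+4) (hs : sideNat n w x = false) :
    ∃ m, m ≤ n ∧ x = elB w m := by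
  by_cases h0 : x = 0 ∨ 2*n+3 ≤ x
  · rw [sideNat, if_pos h0] at hs; exact absurd hs (by simp)
  · push_neg at h0
    rw [sideNat, if_neg (by push_neg; exact h0)] at hs
    rcases Nat.mod_two_eq_zero_or_one x with hpar | hpar
    · refine ⟨(x-2)/2, by omega, ?_⟩
      rw [if_neg (by omega)] at hs
      rw [elB, if_neg (by rw [hs]; exact Bool.false_ne_true)]
      omega
    · refine ⟨(x-1)/2, by omega, ?_⟩
      rw [if_pos hpar] at hs
      have : pturn w ((x-1)/2) = true := by
        cases hpte : pturn w ((x-1)/2)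
        · rw [hpte] at hs; simp at hs
        · rfl
      rw [elB, if_pos this]
      omega

theorem le_top_A {x : ℕ} (hx : x = 0 ∨ x = 2*n+3 ∨ ∃ m, m ≤ n ∧ x = elA w m) :
    SnakeLE n w x 0 := by
  rcases hx with rfl | rfl | ⟨m, hm, rfl⟩
  · exact Relation.ReflTransGen.refl
  · exact le0_bot n w
  · exact le0A n w hm

theorem ge_bot_A {x : ℕ} (hx : x = 0 ∨ x = 2*n+3 ∨ ∃ m, m ≤ n ∧ x = elA w m) :
    SnakeLE n w (2*n+3) x := by
  rcases hx with rfl | rfl | ⟨m, hm, rfl⟩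
  · exact le0_bot n w
  · exact Relation.ReflTransGen.refl
  · exact botA n w hm

theorem sideA_comp {x y : ℕ}
    (hx : x = 0 ∨ x = 2*n+3 ∨ ∃ m, m ≤ n ∧ x = elA w m)
    (hy : y = 0 ∨ y = 2*n+3 ∨ ∃ m, m ≤ n ∧ y = elA w m) :
    SnakeLE n w x y ∨ SnakeLE n w y x := by
  rcases hx with rfl | rfl | ⟨m, hm, rfl⟩
  · exact Or.inr (le_top_A n w hy)
  · exact Or.inl (ge_bot_A n w hy)
  · rcases hy with rfl | rfl | ⟨m', hm', rfl⟩
    · exact Or.inl (le0A n w hm)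
    · exact Or.inr (botA n w hm)
    · rcases Nat.le_total m m' with h | h
      · exact Or.inr (chainA n w h hm')
      · exact Or.inl (chainA n w h hm)

theorem side_comparable (a b : SnakeHat n w)
    (h : sideNat n w a.1 = sideNat n w b.1) : a ≤ b ∨ b ≤ a := by
  have hlt_a := a.2
  have hlt_b := b.2
  have hle_iff : ∀ u v : SnakeHat n w, (u ≤ v) = SnakeHatLE n w u.1 v.1 := fun _ _ => rfl
  by_cases ha5 : a.1 = 2*n+5
  · exact Or.inl (by rw [hle_iff]; exact Or.inl ha5)
  by_cases hb5 : b.1 = 2*n+5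
  · exact Or.inr (by rw [hle_iff]; exact Or.inl hb5)
  by_cases ha4 : a.1 = 2*n+4
  · exact Or.inr (by rw [hle_iff]; exact Or.inr (Or.inl ha4))
  by_cases hb4 : b.1 = 2*n+4
  · exact Or.inl (by rw [hle_iff]; exact Or.inr (Or.inl hb4))
  have ha : a.1 < 2*n+4 := by omega
  have hb : b.1 < 2*n+4 := by omega
  cases hs : sideNat n w a.1
  · rw [hs] at h
    obtain ⟨m, hm, he⟩ := sideB_char n w ha hs
    obtain ⟨m', hm', he'⟩ := sideB_char n w hb h.symm
    rcases Nat.le_total m m' with hmm | hmm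
    · exact Or.inr (by rw [hle_iff, he, he']; exact Or.inr (Or.inr
        ⟨by rw [← he']; exact hb, by rw [← he]; exact ha, chainB n w hmm hm'⟩))
    · exact Or.inl (by rw [hle_iff, he, he']; exact Or.inr (Or.inr
        ⟨by rw [← he]; exact ha, by rw [← he']; exact hb, chainB n w hmm hm⟩))
  · rw [hs] at h
    have hca := sideA_char n w ha hs
    have hcb := sideA_char n w hb h.symm
    rcases sideA_comp n w hca hcb with hh | hh
    · exact Or.inl (by rw [hle_iff]; exact Or.inr (Or.inr ⟨by omega, by omega, hh⟩))
    · exact Or.inr (by rw [hle_iff]; exact Or.inr (Or.inr ⟨by omega, by omega, hh⟩))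

end Snake

theorem stmt12 (n : ℕ) (w : ℕ → Letter) (hw : InV n w) :
    ∀ Z : Set (SnakeQ n w → ℝ), Z ⊆ OPVertexSet (SnakeQ n w) → IsAffCircuit Z →
      Even Z.ncard ∧
        ∃ Zp Zm : Set (SnakeQ n w → ℝ),
          Zp ∪ Zm = Z ∧ Disjoint Zp Zm ∧ Zp.Nonempty ∧ Zm.Nonempty ∧
            (∑ᶠ v ∈ Zp, v) = (∑ᶠ v ∈ Zm, v) ∧ Zp.ncard = Zm.ncard := by
  classical
  letI : Fintype (SnakeHat n w) := inferInstanceAs (Fintype (Fin (2*n+6)))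
  letI : Fintype (SnakeQ n w) := Subtype.fintype _
  intro Z hZsub hcirc
  exact core_circuit (fun x => sideNat n w x.1.1)
    (fun p q hpq => by
      rcases side_comparable n w p.1 q.1 hpq with h | h
      · exact Or.inl h
      · exact Or.inr h)
    Z hZsub hcirc
end
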